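/- arXiv:1310.2262 — 6 statements merged into one kernel-verified Lean document; each statement's English description precedes it below -/
import Mathlib

section
/- Let d ≥ 3 and n ≥ 1. Suppose V : ℝ^d → [0,∞) is measurable and satisfies sup_{x∈ℝ^d} ∫_{ℝ^d} V(y) |x−y|^{2−d} dy < ∞. Define W : ℝ^d × ℝ^n → [0,∞) by W(x₁,x₂) := V(x₁). Then W satisfies the corresponding condition in dimension d+n, i.e. sup_{(x₁,x₂)∈ℝ^{d+n}} ∫_{ℝ^{d+n}} V(y₁) |(x₁,x₂) − (y₁,y₂)|^{2−(d+n)} dy₁ dy₂ < ∞. -/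
open MeasureTheory ENNReal

noncomputable section

namespace Stmt1Aux

abbrev ES (k : ℕ) := EuclideanSpace ℝ (Fin k)

def φ (d n : ℕ) : ES d × ES n → ES (d + n) := fun p =>
  (MeasurableEquiv.toLp 2 (Fin (d + n) → ℝ)).symm.symm <|
    (MeasurableEquiv.piCongrLeft (fun _ : Fin (d + n) => ℝ) finSumFinEquiv) <|
      (MeasurableEquiv.sumPiEquivProdPi (fun _ : Fin d ⊕ Fin n => ℝ)).symm
        (Prod.map (MeasurableEquiv.toLp 2 (Fin d → ℝ)).symm
          (MeasurableEquiv.toLp 2 (Fin n → ℝ)).symm p)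

lemma φ_mp (d n : ℕ) : MeasurePreserving (φ d n) volume volume := by
  refine ((EuclideanSpace.volume_preserving_symm_measurableEquiv_toLp (Fin (d+n))).symm).comp <|
    ((volume_measurePreserving_piCongrLeft (fun _ : Fin (d+n) => ℝ) finSumFinEquiv)).comp <|
      ((volume_measurePreserving_sumPiEquivProdPi_symm (fun _ : Fin d ⊕ Fin n => ℝ))).comp ?_
  rw [Measure.volume_eq_prod, Measure.volume_eq_prod]
  exact (EuclideanSpace.volume_preserving_symm_measurableEquiv_toLp (Fin d)).prod
    (EuclideanSpace.volume_preserving_symm_measurableEquiv_toLp (Fin n))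

lemma φ_apply (d n : ℕ) (a : ES d) (b : ES n) (j : Fin (d + n)) :
    φ d n (a, b) j = Sum.elim (a : Fin d → ℝ) (b : Fin n → ℝ) (finSumFinEquiv.symm j) := by
  show (Equiv.piCongrLeft (fun _ : Fin (d + n) => ℝ) finSumFinEquiv) _ j = _
  conv_lhs => rw [← Equiv.apply_symm_apply finSumFinEquiv j]
  rw [Equiv.piCongrLeft_apply_apply]
  rfl

lemma φ_castAdd (d n : ℕ) (a : ES d) (b : ES n) (i : Fin d) :
    φ d n (a, b) (Fin.castAdd n i) = a i := by
  rw [φ_apply, finSumFinEquiv_symm_apply_castAdd]; rfl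

lemma φ_natAdd (d n : ℕ) (a : ES d) (b : ES n) (i : Fin n) :
    φ d n (a, b) (Fin.natAdd d i) = b i := by
  rw [φ_apply, finSumFinEquiv_symm_apply_natAdd]; rfl

def proj1 (d n : ℕ) (x : ES (d + n)) : ES d := WithLp.toLp 2 (fun i => x (Fin.castAdd n i))
def proj2 (d n : ℕ) (x : ES (d + n)) : ES n := WithLp.toLp 2 (fun i => x (Fin.natAdd d i))

lemma normsq (k : ℕ) (u : ES k) : ‖u‖ ^ 2 = ∑ i, u i ^ 2 := by
  rw [EuclideanSpace.norm_eq, Real.sq_sqrt (by positivity)]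
  simp [sq_abs]

lemma norm_split (d n : ℕ) (x : ES (d + n)) (a : ES d) (b : ES n) :
    ‖x - φ d n (a, b)‖ ^ 2 = ‖proj1 d n x - a‖ ^ 2 + ‖proj2 d n x - b‖ ^ 2 := by
  rw [normsq, normsq, normsq, Fin.sum_univ_add]
  congr 1
  · exact Finset.sum_congr rfl fun i _ => by
      have : (x - φ d n (a,b)) (Fin.castAdd n i) = x (Fin.castAdd n i) - a i := by
        simp [φ_castAdd]
      rw [this]; rfl
  · exact Finset.sum_congr rfl fun i _ => by
      have : (x - φ d n (a,b)) (Fin.natAdd d i) = x (Fin.natAdd d i) - b i := by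
        simp [φ_natAdd]
      rw [this]; rfl

lemma scale (n : ℕ) (f : ES n → ℝ≥0∞) (hf : Measurable f) {r : ℝ} (hr : r ≠ 0) :
    ∫⁻ x : ES n, f (r • x) = ENNReal.ofReal |(r ^ n)⁻¹| * ∫⁻ x, f x := by
  rw [← lintegral_map hf (measurable_const_smul r), Measure.map_addHaar_smul volume hr,
    lintegral_smul_measure, finrank_euclideanSpace_fin, smul_eq_mul]

lemma g_meas (n : ℕ) (e : ℝ) :
    Measurable fun b : ES n => ENNReal.ofReal ((1 + ‖b‖ ^ 2) ^ (e / 2)) := by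
  fun_prop

lemma key (d n : ℕ) {a : ℝ} (ha : 0 < a) :
    ∫⁻ b : ES n, ENNReal.ofReal ((a ^ 2 + ‖b‖ ^ 2) ^ (((2:ℝ) - ((d:ℝ) + n)) / 2))
      = ENNReal.ofReal (a ^ ((2:ℝ) - d)) *
        ∫⁻ b : ES n, ENNReal.ofReal ((1 + ‖b‖ ^ 2) ^ (((2:ℝ) - ((d:ℝ) + n)) / 2)) := by
  set e : ℝ := (2:ℝ) - ((d:ℝ) + n) with he
  have ha' : a ≠ 0 := ha.ne'
  have step1 : ∀ b : ES n, a ^ 2 + ‖b‖ ^ 2 = a ^ 2 * (1 + ‖a⁻¹ • b‖ ^ 2) := by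
    intro b
    rw [norm_smul, Real.norm_eq_abs, mul_pow, sq_abs]
    field_simp
  have step2 : ∀ b : ES n,
      ENNReal.ofReal ((a ^ 2 + ‖b‖ ^ 2) ^ (e / 2))
        = ENNReal.ofReal (a ^ e) * ENNReal.ofReal ((1 + ‖a⁻¹ • b‖ ^ 2) ^ (e / 2)) := by
    intro b
    rw [step1 b, Real.mul_rpow (by positivity) (by positivity),
      ← ENNReal.ofReal_mul (by positivity)]
    congr 2
    rw [← Real.rpow_natCast a 2, ← Real.rpow_mul ha.le]
    congr 1
    ring
  simp_rw [step2]
  rw [lintegral_const_mul _ (show Measurable fun b : ES n =>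
    ENNReal.ofReal ((1 + ‖a⁻¹ • b‖ ^ 2) ^ (e / 2)) by fun_prop)]
  have := scale n (fun b => ENNReal.ofReal ((1 + ‖b‖ ^ 2) ^ (e / 2))) (g_meas n e)
    (inv_ne_zero ha')
  rw [this, ← mul_assoc, ← ENNReal.ofReal_mul (by positivity)]
  congr 2
  rw [inv_pow, inv_inv, abs_of_nonneg (by positivity), ← Real.rpow_natCast a n,
    ← Real.rpow_add ha]
  congr 1
  rw [he]; ring

lemma Cfin (d n : ℕ) (hd : 3 ≤ d) :
    ∫⁻ b : ES n, ENNReal.ofReal ((1 + ‖b‖ ^ 2) ^ (((2:ℝ) - ((d:ℝ) + n)) / 2)) < ⊤ := by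
  have hnr : (Module.finrank ℝ (ES n) : ℝ) < (d:ℝ) + n - 2 := by
    rw [finrank_euclideanSpace_fin]
    have : (3:ℝ) ≤ d := by exact_mod_cast hd
    linarith
  have h := (integrable_rpow_neg_one_add_norm_sq (E := ES n) (μ := volume) hnr).lintegral_lt_top
  convert h using 3 with b
  ring_nf

lemma inner_eq (d n : ℕ) (x₂ : ES n) {c : ℝ} (hc : 0 < c) :
    ∫⁻ b : ES n, ENNReal.ofReal ((c ^ 2 + ‖x₂ - b‖ ^ 2) ^ (((2:ℝ) - ((d:ℝ) + n)) / 2))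
      = ENNReal.ofReal (c ^ ((2:ℝ) - d)) *
        ∫⁻ b : ES n, ENNReal.ofReal ((1 + ‖b‖ ^ 2) ^ (((2:ℝ) - ((d:ℝ) + n)) / 2)) := by
  have hg : Measurable fun b : ES n =>
      ENNReal.ofReal ((c ^ 2 + ‖b‖ ^ 2) ^ (((2:ℝ) - ((d:ℝ) + n)) / 2)) := by fun_prop
  calc ∫⁻ b : ES n, ENNReal.ofReal ((c ^ 2 + ‖x₂ - b‖ ^ 2) ^ (((2:ℝ) - ((d:ℝ) + n)) / 2))
      = ∫⁻ b : ES n, ENNReal.ofReal ((c ^ 2 + ‖b‖ ^ 2) ^ (((2:ℝ) - ((d:ℝ) + n)) / 2)) :=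
        (Measure.measurePreserving_sub_left (volume : Measure (ES n)) x₂).lintegral_comp hg
    _ = _ := key d n hc

lemma proj1_meas (d n : ℕ) : Measurable (proj1 d n) := by
  unfold proj1; fun_prop

end Stmt1Aux

end

/-- If `V ≥ 0` on `ℝ^d`, `d ≥ 3`, satisfies condition (K), then
`W(x₁,x₂) := V(x₁)` on `ℝ^{d+n}` satisfies condition (K) in dimension `d+n`. -/
theorem stmt_1 (d n : ℕ) (hd : 3 ≤ d) (hn : 1 ≤ n)
    (V : EuclideanSpace ℝ (Fin d) → ℝ) (hVmeas : Measurable V) (hV0 : ∀ y, 0 ≤ V y)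
    (hK : (⨆ x : EuclideanSpace ℝ (Fin d),
        ∫⁻ y, ENNReal.ofReal (V y * ‖x - y‖ ^ ((2 : ℝ) - d))) < ⊤) :
    (⨆ x : EuclideanSpace ℝ (Fin (d + n)),
        ∫⁻ y : EuclideanSpace ℝ (Fin (d + n)),
          ENNReal.ofReal (V (WithLp.toLp 2 (fun i => y (Fin.castAdd n i))) *
            ‖x - y‖ ^ ((2 : ℝ) - ((d : ℝ) + n)))) < ⊤ := by
  classical
  open Stmt1Aux in
  set e : ℝ := (2:ℝ) - ((d:ℝ) + n) with he
  set C := ∫⁻ b : Stmt1Aux.ES n, ENNReal.ofReal ((1 + ‖b‖ ^ 2) ^ (e / 2)) with hCdef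
  have hCfin : C < ⊤ := Stmt1Aux.Cfin d n hd
  refine lt_of_le_of_lt (iSup_le fun x => ?_) (ENNReal.mul_lt_top hK hCfin)
  set x₁ := Stmt1Aux.proj1 d n x with hx₁
  set x₂ := Stmt1Aux.proj2 d n x with hx₂
  have hf : Measurable fun y : Stmt1Aux.ES (d + n) =>
      ENNReal.ofReal (V (WithLp.toLp 2 (fun i => y (Fin.castAdd n i))) * ‖x - y‖ ^ e) := by
    refine Measurable.ennreal_ofReal ?_
    refine ((hVmeas.comp (Stmt1Aux.proj1_meas d n)).mul ?_)
    exact ((continuous_const.sub continuous_id).norm.measurable).pow measurable_const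
  have hF : Measurable fun p : Stmt1Aux.ES d × Stmt1Aux.ES n =>
      ENNReal.ofReal (V p.1 * ((‖x₁ - p.1‖ ^ 2 + ‖x₂ - p.2‖ ^ 2) ^ (e / 2))) := by
    refine Measurable.ennreal_ofReal ?_
    refine (hVmeas.comp measurable_fst).mul ?_
    have hbase : Continuous fun p : Stmt1Aux.ES d × Stmt1Aux.ES n =>
        ‖x₁ - p.1‖ ^ 2 + ‖x₂ - p.2‖ ^ 2 := by fun_prop
    exact hbase.measurable.pow measurable_const
  have hpt : ∀ (a : Stmt1Aux.ES d) (b : Stmt1Aux.ES n),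
      ENNReal.ofReal (V (WithLp.toLp 2 (fun i => (Stmt1Aux.φ d n (a, b)) (Fin.castAdd n i))) *
          ‖x - Stmt1Aux.φ d n (a, b)‖ ^ e)
        = ENNReal.ofReal (V a * ((‖x₁ - a‖ ^ 2 + ‖x₂ - b‖ ^ 2) ^ (e / 2))) := by
    intro a b
    have h1 : (WithLp.toLp 2 (fun i => (Stmt1Aux.φ d n (a, b)) (Fin.castAdd n i))) = (a : Stmt1Aux.ES d) := by
      ext i; exact Stmt1Aux.φ_castAdd d n a b i
    have h2 : ‖x - Stmt1Aux.φ d n (a, b)‖ ^ e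
        = (‖x₁ - a‖ ^ 2 + ‖x₂ - b‖ ^ 2) ^ (e / 2) := by
      rw [← Stmt1Aux.norm_split d n x a b,
        ← Real.rpow_natCast ‖x - Stmt1Aux.φ d n (a, b)‖ 2,
        ← Real.rpow_mul (norm_nonneg _)]
      congr 1
      push_cast
      ring
    rw [h1, h2]
  calc (∫⁻ y : Stmt1Aux.ES (d + n),
        ENNReal.ofReal (V (WithLp.toLp 2 (fun i => y (Fin.castAdd n i))) * ‖x - y‖ ^ e))
      = ∫⁻ p : Stmt1Aux.ES d × Stmt1Aux.ES n,
          ENNReal.ofReal (V (WithLp.toLp 2 (fun i => (Stmt1Aux.φ d n p) (Fin.castAdd n i))) *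
            ‖x - Stmt1Aux.φ d n p‖ ^ e) := ((Stmt1Aux.φ_mp d n).lintegral_comp hf).symm
    _ = ∫⁻ p : Stmt1Aux.ES d × Stmt1Aux.ES n,
          ENNReal.ofReal (V p.1 * ((‖x₁ - p.1‖ ^ 2 + ‖x₂ - p.2‖ ^ 2) ^ (e / 2))) := by
        refine lintegral_congr fun p => ?_
        obtain ⟨a, b⟩ := p
        exact hpt a b
    _ = ∫⁻ a : Stmt1Aux.ES d, ∫⁻ b : Stmt1Aux.ES n,
          ENNReal.ofReal (V a * ((‖x₁ - a‖ ^ 2 + ‖x₂ - b‖ ^ 2) ^ (e / 2))) := by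
        rw [Measure.volume_eq_prod, lintegral_prod _ hF.aemeasurable]
    _ ≤ ∫⁻ a : Stmt1Aux.ES d,
          ENNReal.ofReal (V a * ‖x₁ - a‖ ^ ((2:ℝ) - d)) * C := by
        refine lintegral_mono_ae ?_
        have hsing : (volume : Measure (Stmt1Aux.ES d)) {x₁} = 0 := by
          haveI : Nontrivial (Stmt1Aux.ES d) := by
            refine ⟨⟨0, EuclideanSpace.single ⟨0, by omega⟩ 1, fun h => ?_⟩⟩
            have := congrFun (congrArg WithLp.ofLp h) ⟨0, by omega⟩
            simp [EuclideanSpace.single_apply] at this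
          exact measure_singleton _
        have hne : ∀ᵐ a : Stmt1Aux.ES d ∂volume, a ≠ x₁ := by
          rw [ae_iff]
          simpa [Set.setOf_eq_eq_singleton] using hsing
        filter_upwards [hne] with a hnea
        have hc : 0 < ‖x₁ - a‖ := by
          rw [norm_pos_iff, sub_ne_zero]
          exact fun h => hnea h.symm
        have : (∫⁻ b : Stmt1Aux.ES n,
            ENNReal.ofReal (V a * ((‖x₁ - a‖ ^ 2 + ‖x₂ - b‖ ^ 2) ^ (e / 2))))
            = ENNReal.ofReal (V a) *
              ∫⁻ b : Stmt1Aux.ES n,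
                ENNReal.ofReal ((‖x₁ - a‖ ^ 2 + ‖x₂ - b‖ ^ 2) ^ (e / 2)) := by
          simp_rw [ENNReal.ofReal_mul (hV0 a)]
          rw [lintegral_const_mul _ (show Measurable fun b : Stmt1Aux.ES n =>
            ENNReal.ofReal ((‖x₁ - a‖ ^ 2 + ‖x₂ - b‖ ^ 2) ^ (e / 2)) by fun_prop)]
        rw [this, Stmt1Aux.inner_eq d n x₂ hc, ← mul_assoc,
          ← ENNReal.ofReal_mul (hV0 a)]
    _ = (∫⁻ a : Stmt1Aux.ES d,
          ENNReal.ofReal (V a * ‖x₁ - a‖ ^ ((2:ℝ) - d))) * C :=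
        lintegral_mul_const' C _ hCfin.ne
    _ ≤ (⨆ x' : EuclideanSpace ℝ (Fin d),
          ∫⁻ y, ENNReal.ofReal (V y * ‖x' - y‖ ^ ((2 : ℝ) - d))) * C := by
        exact mul_le_mul_left (le_iSup (fun x' : EuclideanSpace ℝ (Fin d) =>
          ∫⁻ y, ENNReal.ofReal (V y * ‖x' - y‖ ^ ((2 : ℝ) - d))) x₁) C
end

section
/- Let d ≥ 1 and let n, β be real numbers with n > 2 and β > 0. Define g(x) = (1+|x|)^{−n−β} and g_s(x) = s^{−n/2} g(x/√s) for s > 0. Then there is a constant C > 0, depending only on d, n, β, such that for every t > 0 and every x ∈ ℝ^d with x ≠ 0, ∫_0^t g_s(x) ds ≤ C |x|^{2−n} (1 + |x|/√t)^{−2−β}. -/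
open MeasureTheory ENNReal

private lemma lint_rpow_Ioc (p T : ℝ) (hp : -1 < p) (hT : 0 < T) :
    ∫⁻ s in Set.Ioc (0:ℝ) T, ENNReal.ofReal (s ^ p) = ENNReal.ofReal (T ^ (p+1) / (p+1)) := by
  rw [← ofReal_integral_eq_lintegral_ofReal]
  · congr 1
    rw [← intervalIntegral.integral_of_le hT.le, integral_rpow (Or.inl hp),
      Real.zero_rpow (by linarith), sub_zero]
  · exact (intervalIntegral.intervalIntegrable_rpow' hp).1
  · filter_upwards [ae_restrict_mem measurableSet_Ioc] with s hs
    exact Real.rpow_nonneg hs.1.le p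

private lemma lint_c_rpow_Ioc (c p T : ℝ) (hc : 0 ≤ c) (hp : -1 < p) (hT : 0 < T) :
    ∫⁻ s in Set.Ioc (0:ℝ) T, ENNReal.ofReal (c * s ^ p)
      = ENNReal.ofReal (c * (T ^ (p+1) / (p+1))) := by
  simp_rw [ENNReal.ofReal_mul hc]
  rw [lintegral_const_mul' _ _ ofReal_ne_top, lint_rpow_Ioc p T hp hT]

private lemma lint_rpow_Ioi (p c : ℝ) (hp : p < -1) (hc : 0 < c) :
    ∫⁻ s in Set.Ioi c, ENNReal.ofReal (s ^ p) = ENNReal.ofReal (-c ^ (p+1) / (p+1)) := by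
  rw [← ofReal_integral_eq_lintegral_ofReal]
  · rw [integral_Ioi_rpow_of_lt hp hc]
  · exact integrableOn_Ioi_rpow_of_lt hp hc
  · filter_upwards [ae_restrict_mem measurableSet_Ioi] with s hs
    exact Real.rpow_nonneg (hc.le.trans (le_of_lt hs)) p

/-- For `n > 2`, `β > 0`, `g_s(x) = s^{-n/2}(1+|x|/√s)^{-n-β}`, one has
`∫_0^t g_s(x) ds ≤ C |x|^{2-n} (1+|x|/√t)^{-2-β}` for `t > 0`, `x ≠ 0`. -/
theorem stmt_3 (d : ℕ) (hd : 1 ≤ d) (n β : ℝ) (hn : 2 < n) (hβ : 0 < β) :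
    ∃ C > 0, ∀ t : ℝ, 0 < t → ∀ x : EuclideanSpace ℝ (Fin d), x ≠ 0 →
      ∫⁻ s in Set.Ioc (0 : ℝ) t,
          ENNReal.ofReal (s ^ (-n / 2) * (1 + ‖x‖ / Real.sqrt s) ^ (-n - β)) ≤
        ENNReal.ofReal (C * ‖x‖ ^ ((2 : ℝ) - n) * (1 + ‖x‖ / Real.sqrt t) ^ (-2 - β)) := by
  have h2β : (0:ℝ) < 2 / (β + 2) := by positivity
  have h2n : (0:ℝ) < 2 / (n - 2) := by
    apply div_pos two_pos; linarith
  set C : ℝ := 2 ^ (2 + β) * (2 / (β + 2) + 2 / (n - 2)) with hCdef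
  have hCpos : 0 < C := by
    apply mul_pos (Real.rpow_pos_of_pos two_pos _); linarith
  have P4 : (2:ℝ) ^ (2 + β) * 2 ^ (-2 - β) = 1 := by
    rw [← Real.rpow_add two_pos, show (2 + β) + (-2 - β) = 0 by ring, Real.rpow_zero]
  refine ⟨C, hCpos, ?_⟩
  intro t ht x hx
  set r : ℝ := ‖x‖ with hrdef
  have hr0 : 0 < r := norm_pos_iff.mpr hx
  set u : ℝ := Real.sqrt t with hudef
  have hu0 : 0 < u := Real.sqrt_pos.mpr ht
  have htu : t = u ^ (2:ℝ) := by
    rw [show ((2:ℝ)) = ((2:ℕ):ℝ) by norm_num, Real.rpow_natCast]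
    exact (Real.sq_sqrt ht.le).symm
  -- pointwise bound 1
  have key1 : ∀ s : ℝ, 0 < s →
      s ^ (-n / 2) * (1 + r / Real.sqrt s) ^ (-n - β) ≤ r ^ (-(n + β)) * s ^ (β / 2) := by
    intro s hs
    have hss : 0 < Real.sqrt s := Real.sqrt_pos.mpr hs
    have hds : 0 < r / Real.sqrt s := div_pos hr0 hss
    have h1 : (1 + r / Real.sqrt s) ^ (-n - β) ≤ (r / Real.sqrt s) ^ (-n - β) :=
      Real.rpow_le_rpow_of_nonpos hds (by linarith) (by linarith)
    have h2 : (r / Real.sqrt s) ^ (-n - β) = r ^ (-(n + β)) * s ^ ((n + β) / 2) := by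
      rw [Real.div_rpow hr0.le hss.le, Real.sqrt_eq_rpow, ← Real.rpow_mul hs.le,
        show (1/2 : ℝ) * (-n - β) = -((n + β) / 2) by ring, Real.rpow_neg hs.le,
        div_inv_eq_mul, show -n - β = -(n + β) by ring]
    calc s ^ (-n / 2) * (1 + r / Real.sqrt s) ^ (-n - β)
        ≤ s ^ (-n / 2) * (r ^ (-(n + β)) * s ^ ((n + β) / 2)) :=
          mul_le_mul_of_nonneg_left (h1.trans_eq h2) (Real.rpow_nonneg hs.le _)
      _ = r ^ (-(n + β)) * (s ^ (-n / 2) * s ^ ((n + β) / 2)) := by ring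
      _ = r ^ (-(n + β)) * s ^ (β / 2) := by
          rw [← Real.rpow_add hs, show -n / 2 + (n + β) / 2 = β / 2 by ring]
  -- pointwise bound 2
  have key2 : ∀ s : ℝ, 0 < s →
      s ^ (-n / 2) * (1 + r / Real.sqrt s) ^ (-n - β) ≤ s ^ (-n / 2) := by
    intro s hs
    have hss : 0 < Real.sqrt s := Real.sqrt_pos.mpr hs
    have hds : 0 < r / Real.sqrt s := div_pos hr0 hss
    have h1 : (1 + r / Real.sqrt s) ^ (-n - β) ≤ 1 :=
      Real.rpow_le_one_of_one_le_of_nonpos (by linarith) (by linarith)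
    exact mul_le_of_le_one_right (Real.rpow_nonneg hs.le _) h1
  have hmeas1 : Measurable fun s : ℝ => ENNReal.ofReal (r ^ (-(n + β)) * s ^ (β / 2)) :=
    (measurable_const.mul (by fun_prop : Measurable fun s : ℝ => s ^ (β / 2))).ennreal_ofReal
  have hcb : 0 ≤ r ^ (-(n + β)) := Real.rpow_nonneg hr0.le _
  rcases le_or_gt u r with hur | hru
  · -- case t ≤ r², i.e. u ≤ r
    calc ∫⁻ s in Set.Ioc (0 : ℝ) t,
          ENNReal.ofReal (s ^ (-n / 2) * (1 + r / Real.sqrt s) ^ (-n - β))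
        ≤ ∫⁻ s in Set.Ioc (0 : ℝ) t, ENNReal.ofReal (r ^ (-(n + β)) * s ^ (β / 2)) := by
          apply setLIntegral_mono hmeas1
          intro s hs
          exact ENNReal.ofReal_le_ofReal (key1 s hs.1)
      _ = ENNReal.ofReal (r ^ (-(n + β)) * (t ^ (β / 2 + 1) / (β / 2 + 1))) :=
          lint_c_rpow_Ioc _ _ _ hcb (by linarith) ht
      _ ≤ ENNReal.ofReal (C * r ^ ((2 : ℝ) - n) * (1 + r / u) ^ (-2 - β)) := by
          apply ENNReal.ofReal_le_ofReal
          have hdu : (1:ℝ) ≤ r / u := (one_le_div hu0).mpr hur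
          have P1 : (2 * (r / u)) ^ (-2 - β) ≤ (1 + r / u) ^ (-2 - β) :=
            Real.rpow_le_rpow_of_nonpos (by positivity) (by linarith) (by linarith)
          have P2 : (2 * (r / u)) ^ (-2 - β) = 2 ^ (-2 - β) * (r ^ (-2 - β) * u ^ (2 + β)) := by
            rw [Real.mul_rpow (by norm_num) (by positivity),
              Real.div_rpow hr0.le hu0.le,
              show (-2 - β : ℝ) = -(2 + β) by ring, Real.rpow_neg hu0.le, div_inv_eq_mul]
          have P3 : r ^ ((2:ℝ) - n) * r ^ (-2 - β) = r ^ (-(n + β)) := by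
            rw [← Real.rpow_add hr0]; congr 1; ring
          have htpow : t ^ (β / 2 + 1) = u ^ (2 + β) := by
            rw [htu, ← Real.rpow_mul hu0.le, show (2:ℝ) * (β / 2 + 1) = 2 + β by ring]
          rw [htpow]
          have hco : 1 / (β / 2 + 1) ≤ 2 / (β + 2) + 2 / (n - 2) := by
            have he : (1:ℝ) / (β / 2 + 1) = 2 / (β + 2) := by
              rw [div_eq_div_iff (by linarith) (by linarith)]; ring
            rw [he]; linarith
          have Pe : C * r ^ ((2:ℝ) - n) * (2 * (r / u)) ^ (-2 - β)
              = (2 / (β + 2) + 2 / (n - 2)) * (r ^ (-(n + β)) * u ^ (2 + β)) := by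
            rw [P2]
            calc C * r ^ ((2:ℝ) - n) * (2 ^ (-2 - β) * (r ^ (-2 - β) * u ^ (2 + β)))
                = ((2:ℝ) ^ (2 + β) * 2 ^ (-2 - β)) *
                    ((2 / (β + 2) + 2 / (n - 2)) *
                      ((r ^ ((2:ℝ) - n) * r ^ (-2 - β)) * u ^ (2 + β))) := by
                  rw [hCdef]; ring
              _ = (2 / (β + 2) + 2 / (n - 2)) * (r ^ (-(n + β)) * u ^ (2 + β)) := by
                  rw [P4, P3, one_mul]
          calc r ^ (-(n + β)) * (u ^ (2 + β) / (β / 2 + 1))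
              = (1 / (β / 2 + 1)) * (r ^ (-(n + β)) * u ^ (2 + β)) := by ring
            _ ≤ (2 / (β + 2) + 2 / (n - 2)) * (r ^ (-(n + β)) * u ^ (2 + β)) :=
                mul_le_mul_of_nonneg_right hco (by positivity)
            _ = C * r ^ ((2:ℝ) - n) * (2 * (r / u)) ^ (-2 - β) := Pe.symm
            _ ≤ C * r ^ ((2:ℝ) - n) * (1 + r / u) ^ (-2 - β) := by
                apply mul_le_mul_of_nonneg_left P1
                positivity
  · -- case r < u, split at r²
    have hr2t : r ^ (2:ℝ) < t := by
      rw [htu]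
      exact Real.rpow_lt_rpow hr0.le hru two_pos
    have hrr : (0:ℝ) < r ^ (2:ℝ) := by positivity
    have hsplit : Set.Ioc (0:ℝ) t = Set.Ioc 0 (r ^ (2:ℝ)) ∪ Set.Ioc (r ^ (2:ℝ)) t :=
      (Set.Ioc_union_Ioc_eq_Ioc hrr.le hr2t.le).symm
    rw [hsplit, lintegral_union measurableSet_Ioc (Set.Ioc_disjoint_Ioc_of_le le_rfl)]
    have hn2 : (n - 2 : ℝ) ≠ 0 := by linarith
    have piece1 : ∫⁻ s in Set.Ioc (0:ℝ) (r ^ (2:ℝ)),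
        ENNReal.ofReal (s ^ (-n / 2) * (1 + r / Real.sqrt s) ^ (-n - β))
        ≤ ENNReal.ofReal (2 / (β + 2) * r ^ ((2:ℝ) - n)) := by
      calc ∫⁻ s in Set.Ioc (0:ℝ) (r ^ (2:ℝ)),
          ENNReal.ofReal (s ^ (-n / 2) * (1 + r / Real.sqrt s) ^ (-n - β))
          ≤ ∫⁻ s in Set.Ioc (0:ℝ) (r ^ (2:ℝ)),
              ENNReal.ofReal (r ^ (-(n + β)) * s ^ (β / 2)) := by
            apply setLIntegral_mono hmeas1
            intro s hs
            exact ENNReal.ofReal_le_ofReal (key1 s hs.1)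
        _ = ENNReal.ofReal (r ^ (-(n + β)) * ((r ^ (2:ℝ)) ^ (β / 2 + 1) / (β / 2 + 1))) :=
            lint_c_rpow_Ioc _ _ _ hcb (by linarith) hrr
        _ = ENNReal.ofReal (2 / (β + 2) * r ^ ((2:ℝ) - n)) := by
            congr 1
            rw [← Real.rpow_mul hr0.le, show (2:ℝ) * (β / 2 + 1) = β + 2 by ring,
              ← mul_div_assoc, ← Real.rpow_add hr0,
              show -(n + β) + (β + 2) = (2:ℝ) - n by ring,
              show (2:ℝ) / (β + 2) = 1 / (β / 2 + 1) from by
                rw [div_eq_div_iff (by linarith) (by linarith)]; ring]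
            ring
    have piece2 : ∫⁻ s in Set.Ioc (r ^ (2:ℝ)) t,
        ENNReal.ofReal (s ^ (-n / 2) * (1 + r / Real.sqrt s) ^ (-n - β))
        ≤ ENNReal.ofReal (2 / (n - 2) * r ^ ((2:ℝ) - n)) := by
      calc ∫⁻ s in Set.Ioc (r ^ (2:ℝ)) t,
          ENNReal.ofReal (s ^ (-n / 2) * (1 + r / Real.sqrt s) ^ (-n - β))
          ≤ ∫⁻ s in Set.Ioc (r ^ (2:ℝ)) t, ENNReal.ofReal (s ^ (-n / 2)) := by
            apply setLIntegral_mono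
              ((by fun_prop : Measurable fun s : ℝ => s ^ (-n / 2)).ennreal_ofReal)
            intro s hs
            exact ENNReal.ofReal_le_ofReal (key2 s (hrr.trans hs.1))
        _ ≤ ∫⁻ s in Set.Ioi (r ^ (2:ℝ)), ENNReal.ofReal (s ^ (-n / 2)) :=
            lintegral_mono_set Set.Ioc_subset_Ioi_self
        _ = ENNReal.ofReal (-(r ^ (2:ℝ)) ^ (-n / 2 + 1) / (-n / 2 + 1)) :=
            lint_rpow_Ioi _ _ (by linarith) hrr
        _ = ENNReal.ofReal (2 / (n - 2) * r ^ ((2:ℝ) - n)) := by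
            congr 1
            rw [← Real.rpow_mul hr0.le, show (2:ℝ) * (-n / 2 + 1) = 2 - n by ring,
              show (-n / 2 + 1 : ℝ) = -((n - 2) / 2) by ring, div_neg, neg_div, neg_neg,
              div_div_eq_mul_div]
            ring
    calc (∫⁻ s in Set.Ioc (0:ℝ) (r ^ (2:ℝ)),
            ENNReal.ofReal (s ^ (-n / 2) * (1 + r / Real.sqrt s) ^ (-n - β))) +
          ∫⁻ s in Set.Ioc (r ^ (2:ℝ)) t,
            ENNReal.ofReal (s ^ (-n / 2) * (1 + r / Real.sqrt s) ^ (-n - β))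
        ≤ ENNReal.ofReal (2 / (β + 2) * r ^ ((2:ℝ) - n)) +
            ENNReal.ofReal (2 / (n - 2) * r ^ ((2:ℝ) - n)) := add_le_add piece1 piece2
      _ = ENNReal.ofReal ((2 / (β + 2) + 2 / (n - 2)) * r ^ ((2:ℝ) - n)) := by
          rw [← ENNReal.ofReal_add (by positivity)
            (mul_nonneg h2n.le (Real.rpow_nonneg hr0.le _))]
          congr 1
          ring
      _ ≤ ENNReal.ofReal (C * r ^ ((2:ℝ) - n) * (1 + r / u) ^ (-2 - β)) := by
          apply ENNReal.ofReal_le_ofReal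
          have hdu : r / u < 1 := (div_lt_one hu0).mpr hru
          have Q1 : (2:ℝ) ^ (-2 - β) ≤ (1 + r / u) ^ (-2 - β) :=
            Real.rpow_le_rpow_of_nonpos (by positivity) (by linarith) (by linarith)
          have hC2 : C * 2 ^ (-2 - β) = 2 / (β + 2) + 2 / (n - 2) := by
            calc C * 2 ^ (-2 - β)
                = ((2:ℝ) ^ (2 + β) * 2 ^ (-2 - β)) * (2 / (β + 2) + 2 / (n - 2)) := by
                  rw [hCdef]; ring
              _ = 2 / (β + 2) + 2 / (n - 2) := by rw [P4, one_mul]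
          calc (2 / (β + 2) + 2 / (n - 2)) * r ^ ((2:ℝ) - n)
              = C * 2 ^ (-2 - β) * r ^ ((2:ℝ) - n) := by rw [hC2]
            _ ≤ C * (1 + r / u) ^ (-2 - β) * r ^ ((2:ℝ) - n) :=
                mul_le_mul_of_nonneg_right (mul_le_mul_of_nonneg_left Q1 hCpos.le)
                  (Real.rpow_nonneg hr0.le _)
            _ = C * r ^ ((2:ℝ) - n) * (1 + r / u) ^ (-2 - β) := by ring
end

section
/- Let d ≥ 1 and let n, β be real numbers with n > 2 and β > 0. Define g(x) = (1+|x|)^{−n−β} and g_s(x) = s^{−n/2} g(x/√s) for s > 0. Then there is a constant C > 0, depending only on d, n, β, such that for every r > 0 and every x ∈ ℝ^d, ∫_{r²}^∞ g_s(x) ds ≤ C r^{2−n} (1 + |x|/r)^{−n+2}. -/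
open MeasureTheory ENNReal

lemma aux_lint_Ioi {p c : ℝ} (hp : p < -1) (hc : 0 < c) :
    ∫⁻ s in Set.Ioi c, ENNReal.ofReal (s ^ p) = ENNReal.ofReal (-c ^ (p + 1) / (p + 1)) := by
  rw [← integral_Ioi_rpow_of_lt hp hc,
    ← ofReal_integral_eq_lintegral_ofReal (integrableOn_Ioi_rpow_of_lt hp hc)]
  filter_upwards [ae_restrict_mem measurableSet_Ioi] with s hs
  exact Real.rpow_nonneg (le_of_lt (hc.trans hs)) p

lemma aux_lint_Ioc {p b : ℝ} (hp : 0 ≤ p) (hb : 0 ≤ b) :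
    ∫⁻ s in Set.Ioc 0 b, ENNReal.ofReal (s ^ p) = ENNReal.ofReal (b ^ (p + 1) / (p + 1)) := by
  have hint : IntegrableOn (fun s : ℝ => s ^ p) (Set.Ioc 0 b) := by
    rw [← intervalIntegrable_iff_integrableOn_Ioc_of_le hb]
    exact intervalIntegral.intervalIntegrable_rpow' (by linarith)
  rw [← ofReal_integral_eq_lintegral_ofReal hint ?_]
  · congr 1
    rw [← intervalIntegral.integral_of_le hb, integral_rpow (Or.inl (by linarith)),
      Real.zero_rpow (by linarith), sub_zero]
  · filter_upwards [ae_restrict_mem measurableSet_Ioc] with s hs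
    exact Real.rpow_nonneg hs.1.le p

/-- For `n > 2`, `β > 0`, `g_s(x) = s^{-n/2}(1+|x|/√s)^{-n-β}`, one has
`∫_{r²}^∞ g_s(x) ds ≤ C r^{2-n} (1+|x|/r)^{-n+2}` for `r > 0`, `x ∈ ℝ^d`. -/
theorem stmt_4 (d : ℕ) (hd : 1 ≤ d) (n β : ℝ) (hn : 2 < n) (hβ : 0 < β) :
    ∃ C > 0, ∀ r : ℝ, 0 < r → ∀ x : EuclideanSpace ℝ (Fin d),
      ∫⁻ s in Set.Ioi (r ^ 2),
          ENNReal.ofReal (s ^ (-n / 2) * (1 + ‖x‖ / Real.sqrt s) ^ (-n - β)) ≤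
        ENNReal.ofReal (C * r ^ ((2 : ℝ) - n) * (1 + ‖x‖ / r) ^ (-n + 2)) := by
  have hn2 : (0:ℝ) < n - 2 := by linarith
  have hβ2 : (0:ℝ) < β + 2 := by linarith
  set C : ℝ := 2 ^ (n - 1) * (1 / (β + 2) + 1 / (n - 2)) with hC
  have hCpos : 0 < C := by positivity
  refine ⟨C, hCpos, ?_⟩
  intro r hr x
  set X := ‖x‖ with hX
  have hX0 : 0 ≤ X := norm_nonneg x
  have hr2 : (0:ℝ) < r ^ 2 := by positivity
  have hp1 : -n / 2 < -1 := by linarith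
  -- pointwise bound: integrand ≤ s^{-n/2} for s > 0
  have hb1 : ∀ s : ℝ, 0 < s →
      s ^ (-n / 2) * (1 + X / Real.sqrt s) ^ (-n - β) ≤ s ^ (-n / 2) := by
    intro s hs
    have h1 : (1:ℝ) ≤ 1 + X / Real.sqrt s := by
      have : 0 ≤ X / Real.sqrt s := div_nonneg hX0 (Real.sqrt_nonneg s)
      linarith
    have h2 : (1 + X / Real.sqrt s) ^ (-n - β) ≤ 1 :=
      Real.rpow_le_one_of_one_le_of_nonpos h1 (by linarith)
    calc s ^ (-n / 2) * (1 + X / Real.sqrt s) ^ (-n - β)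
        ≤ s ^ (-n / 2) * 1 :=
          mul_le_mul_of_nonneg_left h2 (Real.rpow_nonneg hs.le _)
      _ = s ^ (-n / 2) := mul_one _
  have h2n : (2:ℝ) ^ (n - 1) * 2 ^ ((2:ℝ) - n) = 2 := by
    rw [← Real.rpow_add (by norm_num : (0:ℝ) < 2)]
    norm_num
  by_cases hxr : X ≤ r
  · -- case ‖x‖ ≤ r
    calc ∫⁻ s in Set.Ioi (r ^ 2),
            ENNReal.ofReal (s ^ (-n / 2) * (1 + X / Real.sqrt s) ^ (-n - β))
        ≤ ∫⁻ s in Set.Ioi (r ^ 2), ENNReal.ofReal (s ^ (-n / 2)) := by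
          apply lintegral_mono_ae
          filter_upwards [ae_restrict_mem measurableSet_Ioi] with s hs
          exact ENNReal.ofReal_le_ofReal (hb1 s (hr2.trans hs))
      _ = ENNReal.ofReal (-(r ^ 2 : ℝ) ^ (-n / 2 + 1) / (-n / 2 + 1)) :=
          aux_lint_Ioi hp1 hr2
      _ ≤ ENNReal.ofReal (C * r ^ ((2 : ℝ) - n) * (1 + X / r) ^ (-n + 2)) := by
          apply ENNReal.ofReal_le_ofReal
          have hr2n : ((r ^ 2 : ℝ)) ^ (-n / 2 + 1) = r ^ ((2:ℝ) - n) := by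
            rw [← Real.rpow_natCast r 2, ← Real.rpow_mul hr.le]
            congr 1
            push_cast
            ring
          have hpow : (2:ℝ) ^ ((2:ℝ) - n) ≤ (1 + X / r) ^ (-n + 2) := by
            have h1 : (0:ℝ) < 1 + X / r := by positivity
            have h2 : 1 + X / r ≤ 2 := by
              have : X / r ≤ 1 := (div_le_one hr).mpr hxr
              linarith
            have := Real.rpow_le_rpow_of_nonpos h1 h2 (by linarith : (2:ℝ) - n ≤ 0)
            have he : (-n + 2 : ℝ) = (2:ℝ) - n := by ring
            rw [he]
            exact this
          have hrp : (0:ℝ) < r ^ ((2:ℝ) - n) := Real.rpow_pos_of_pos hr _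
          calc -(r ^ 2 : ℝ) ^ (-n / 2 + 1) / (-n / 2 + 1)
              = (2 / (n - 2)) * r ^ ((2:ℝ) - n) := by
                have h0' : n - 2 ≠ 0 := by intro h; linarith
                have h0'' : -n / 2 + 1 ≠ 0 := by intro h; linarith
                have hsc : (-1 : ℝ) / (-n / 2 + 1) = 2 / (n - 2) := by
                  rw [div_eq_div_iff h0'' h0']; ring
                rw [hr2n]
                calc -r ^ ((2:ℝ) - n) / (-n / 2 + 1)
                    = (-1 / (-n / 2 + 1)) * r ^ ((2:ℝ) - n) := by ring
                  _ = 2 / (n - 2) * r ^ ((2:ℝ) - n) := by rw [hsc]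
            _ ≤ (2 / (β + 2) + 2 / (n - 2)) * r ^ ((2:ℝ) - n) := by
                have : (0:ℝ) ≤ 2 / (β + 2) := by positivity
                nlinarith
            _ = C * 2 ^ ((2:ℝ) - n) * r ^ ((2:ℝ) - n) := by
                rw [hC]
                linear_combination (-(1 / (β + 2) + 1 / (n - 2)) * r ^ ((2:ℝ) - n)) * h2n
            _ ≤ C * (1 + X / r) ^ (-n + 2) * r ^ ((2:ℝ) - n) := by
                have := mul_le_mul_of_nonneg_left hpow hCpos.le
                nlinarith
            _ = C * r ^ ((2:ℝ) - n) * (1 + X / r) ^ (-n + 2) := by ring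
  · -- case r < ‖x‖
    push_neg at hxr
    have hXpos : 0 < X := hr.trans hxr
    have hX2 : (0:ℝ) < X ^ 2 := by positivity
    have hrX : (r:ℝ) ^ 2 ≤ X ^ 2 := by nlinarith
    have hsplit : Set.Ioi (r ^ 2) = Set.Ioc (r ^ 2) (X ^ 2) ∪ Set.Ioi (X ^ 2) :=
      (Set.Ioc_union_Ioi_eq_Ioi hrX).symm
    rw [hsplit, lintegral_union measurableSet_Ioi (Set.Ioc_disjoint_Ioi le_rfl)]
    -- bound each piece
    have pieceA : ∫⁻ s in Set.Ioc (r ^ 2) (X ^ 2),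
        ENNReal.ofReal (s ^ (-n / 2) * (1 + X / Real.sqrt s) ^ (-n - β))
        ≤ ENNReal.ofReal (X ^ (-n - β) * ((X ^ 2 : ℝ) ^ (β / 2 + 1) / (β / 2 + 1))) := by
      have hbd : ∀ s ∈ Set.Ioc (r ^ 2) (X ^ 2),
          s ^ (-n / 2) * (1 + X / Real.sqrt s) ^ (-n - β) ≤ X ^ (-n - β) * s ^ (β / 2) := by
        intro s hs
        have hs0 : (0:ℝ) < s := hr2.trans hs.1
        have hsq : (0:ℝ) < Real.sqrt s := Real.sqrt_pos.mpr hs0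
        have hXq : (0:ℝ) < X / Real.sqrt s := div_pos hXpos hsq
        have h1 : (1 + X / Real.sqrt s) ^ (-n - β) ≤ (X / Real.sqrt s) ^ (-n - β) :=
          Real.rpow_le_rpow_of_nonpos hXq (by linarith) (by linarith)
        have heq : s ^ (-n / 2) * (X / Real.sqrt s) ^ (-n - β) = X ^ (-n - β) * s ^ (β / 2) := by
          rw [Real.div_rpow hX0 (Real.sqrt_nonneg s), Real.sqrt_eq_rpow,
            ← Real.rpow_mul hs0.le]
          have hss : s ^ (-n / 2) / s ^ (1 / 2 * (-n - β)) = s ^ (β / 2) := by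
            rw [← Real.rpow_sub hs0]; congr 1; ring
          calc s ^ (-n / 2) * (X ^ (-n - β) / s ^ (1 / 2 * (-n - β)))
              = X ^ (-n - β) * (s ^ (-n / 2) / s ^ (1 / 2 * (-n - β))) := by ring
            _ = X ^ (-n - β) * s ^ (β / 2) := by rw [hss]
        calc s ^ (-n / 2) * (1 + X / Real.sqrt s) ^ (-n - β)
            ≤ s ^ (-n / 2) * (X / Real.sqrt s) ^ (-n - β) :=
              mul_le_mul_of_nonneg_left h1 (Real.rpow_nonneg hs0.le _)
          _ = X ^ (-n - β) * s ^ (β / 2) := heq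
      calc ∫⁻ s in Set.Ioc (r ^ 2) (X ^ 2),
              ENNReal.ofReal (s ^ (-n / 2) * (1 + X / Real.sqrt s) ^ (-n - β))
          ≤ ∫⁻ s in Set.Ioc (r ^ 2) (X ^ 2),
              ENNReal.ofReal (X ^ (-n - β)) * ENNReal.ofReal (s ^ (β / 2)) := by
            apply lintegral_mono_ae
            filter_upwards [ae_restrict_mem measurableSet_Ioc] with s hs
            rw [← ENNReal.ofReal_mul (Real.rpow_nonneg hX0 _)]
            exact ENNReal.ofReal_le_ofReal (hbd s hs)
        _ = ENNReal.ofReal (X ^ (-n - β)) *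
              ∫⁻ s in Set.Ioc (r ^ 2) (X ^ 2), ENNReal.ofReal (s ^ (β / 2)) :=
            lintegral_const_mul' _ _ ENNReal.ofReal_ne_top
        _ ≤ ENNReal.ofReal (X ^ (-n - β)) *
              ∫⁻ s in Set.Ioc 0 (X ^ 2), ENNReal.ofReal (s ^ (β / 2)) := by
            gcongr
        _ = ENNReal.ofReal (X ^ (-n - β)) *
              ENNReal.ofReal ((X ^ 2 : ℝ) ^ (β / 2 + 1) / (β / 2 + 1)) := by
            rw [aux_lint_Ioc (by positivity) hX2.le]
        _ = ENNReal.ofReal (X ^ (-n - β) * ((X ^ 2 : ℝ) ^ (β / 2 + 1) / (β / 2 + 1))) := by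
            rw [ENNReal.ofReal_mul (Real.rpow_nonneg hX0 _)]
    have pieceB : ∫⁻ s in Set.Ioi (X ^ 2),
        ENNReal.ofReal (s ^ (-n / 2) * (1 + X / Real.sqrt s) ^ (-n - β))
        ≤ ENNReal.ofReal (-(X ^ 2 : ℝ) ^ (-n / 2 + 1) / (-n / 2 + 1)) := by
      calc ∫⁻ s in Set.Ioi (X ^ 2),
              ENNReal.ofReal (s ^ (-n / 2) * (1 + X / Real.sqrt s) ^ (-n - β))
          ≤ ∫⁻ s in Set.Ioi (X ^ 2), ENNReal.ofReal (s ^ (-n / 2)) := by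
            apply lintegral_mono_ae
            filter_upwards [ae_restrict_mem measurableSet_Ioi] with s hs
            exact ENNReal.ofReal_le_ofReal (hb1 s (hX2.trans hs))
        _ = ENNReal.ofReal (-(X ^ 2 : ℝ) ^ (-n / 2 + 1) / (-n / 2 + 1)) :=
            aux_lint_Ioi hp1 hX2
    refine (add_le_add pieceA pieceB).trans ?_
    rw [← ENNReal.ofReal_add (p := X ^ (-n - β) * ((X ^ 2 : ℝ) ^ (β / 2 + 1) / (β / 2 + 1)))
      (q := -(X ^ 2 : ℝ) ^ (-n / 2 + 1) / (-n / 2 + 1)) (by positivity) ?hq']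
    case hq' =>
      have h1 : ((X:ℝ) ^ 2) ^ (-n / 2 + 1) = X ^ ((2:ℝ) - n) := by
        rw [← Real.rpow_natCast X 2, ← Real.rpow_mul hX0]
        congr 1; push_cast; ring
      rw [h1]
      have : (0:ℝ) < X ^ ((2:ℝ) - n) := Real.rpow_pos_of_pos hXpos _
      have h2 : -n / 2 + 1 ≤ 0 := by linarith
      exact div_nonneg_of_nonpos (by linarith) h2
    apply ENNReal.ofReal_le_ofReal
    -- final real inequality
    have hX2n : ((X:ℝ) ^ 2) ^ (-n / 2 + 1) = X ^ ((2:ℝ) - n) := by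
      rw [← Real.rpow_natCast X 2, ← Real.rpow_mul hX0]
      congr 1; push_cast; ring
    have hXb : ((X:ℝ) ^ 2) ^ (β / 2 + 1) = X ^ (β + 2) := by
      rw [← Real.rpow_natCast X 2, ← Real.rpow_mul hX0]
      congr 1; push_cast; ring
    have hXcomb : X ^ (-n - β) * X ^ (β + 2) = X ^ ((2:ℝ) - n) := by
      rw [← Real.rpow_add hXpos]; congr 1; ring
    have hLHS : X ^ (-n - β) * ((X ^ 2 : ℝ) ^ (β / 2 + 1) / (β / 2 + 1)) +
        -(X ^ 2 : ℝ) ^ (-n / 2 + 1) / (-n / 2 + 1)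
        = (2 / (β + 2) + 2 / (n - 2)) * X ^ ((2:ℝ) - n) := by
      rw [hX2n, hXb, ← mul_div_assoc, hXcomb]
      have e1 : (1:ℝ) / (β / 2 + 1) = 2 / (β + 2) := by
        rw [div_eq_div_iff (by positivity) (by positivity)]; ring
      have e2 : (-1 : ℝ) / (-n / 2 + 1) = 2 / (n - 2) := by
        rw [div_eq_div_iff (ne_of_lt (by linarith)) (ne_of_gt hn2)]; ring
      linear_combination X ^ ((2:ℝ) - n) * e1 + X ^ ((2:ℝ) - n) * e2
    rw [hLHS]
    -- RHS lower bound
    have h1r : (1:ℝ) ≤ X / r := (one_le_div hr).mpr hxr.le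
    have hpos1 : (0:ℝ) < 1 + X / r := by linarith
    have hle2 : 1 + X / r ≤ 2 * (X / r) := by linarith
    have hpow : (2 * (X / r)) ^ ((2:ℝ) - n) ≤ (1 + X / r) ^ (-n + 2) := by
      have := Real.rpow_le_rpow_of_nonpos hpos1 hle2 (by linarith : (2:ℝ) - n ≤ 0)
      have he : (-n + 2 : ℝ) = (2:ℝ) - n := by ring
      rw [he]; exact this
    have hval : (2 * (X / r)) ^ ((2:ℝ) - n) =
        2 ^ ((2:ℝ) - n) * (X ^ ((2:ℝ) - n) / r ^ ((2:ℝ) - n)) := by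
      rw [Real.mul_rpow (by norm_num) (le_of_lt (div_pos hXpos hr)),
        Real.div_rpow hX0 hr.le]
    have hrpos : (0:ℝ) < r ^ ((2:ℝ) - n) := Real.rpow_pos_of_pos hr _
    calc (2 / (β + 2) + 2 / (n - 2)) * X ^ ((2:ℝ) - n)
        = C * r ^ ((2:ℝ) - n) * (2 ^ ((2:ℝ) - n) * (X ^ ((2:ℝ) - n) / r ^ ((2:ℝ) - n))) := by
          rw [hC]
          have hcancel : r ^ ((2:ℝ) - n) * (X ^ ((2:ℝ) - n) / r ^ ((2:ℝ) - n))
              = X ^ ((2:ℝ) - n) := mul_div_cancel₀ _ (ne_of_gt hrpos)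
          linear_combination (-(1 / (β + 2) + 1 / (n - 2)) *
              (r ^ ((2:ℝ) - n) * (X ^ ((2:ℝ) - n) / r ^ ((2:ℝ) - n)))) * h2n +
            (-(2 * (1 / (β + 2) + 1 / (n - 2)))) * hcancel
      _ = C * r ^ ((2:ℝ) - n) * (2 * (X / r)) ^ ((2:ℝ) - n) := by rw [hval]
      _ ≤ C * r ^ ((2:ℝ) - n) * (1 + X / r) ^ (-n + 2) := by
          have h0 : (0:ℝ) ≤ C * r ^ ((2:ℝ) - n) := by positivity
          exact mul_le_mul_of_nonneg_left hpow h0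
end

section
/- Let d ≥ 3, 1 < q < ∞, ε > 0 and 0 < δ₀ ≤ 1. Then there is a constant C > 0 such that the following holds. Let w : ℝ^d → ℝ be measurable with δ₀ ≤ w(x) ≤ 1 for almost every x, and let b be a (1,q,ε,w)-molecule associated with a ball B = B(x₀,r), i.e. (∫_B |b|^q)^{1/q} ≤ |B|^{1/q−1}, (∫_{2^k B ∖ 2^{k−1} B} |b|^q)^{1/q} ≤ |2^k B|^{1/q−1} 2^{−εk} for all integers k ≥ 1, and ∫_{ℝ^d} b(x) w(x) dx = 0. Then there exist complex numbers λ_n and functions a_n, n ≥ 1, such that each a_n is a (1,q,w)-atom (i.e. there is a ball B_n with supp a_n ⊂ B_n, ‖a_n‖_{L^q} ≤ |B_n|^{1/q−1}, and ∫ a_n(x) w(x) dx = 0), b = Σ_{n=1}^∞ λ_n a_n with the series converging in L^1(ℝ^d), and Σ_{n=1}^∞ |λ_n| ≤ C. -/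
set_option maxHeartbeats 1000000


open MeasureTheory ENNReal

/-- Every `(1,q,ε,w)`-molecule decomposes as `b = Σ λₙ aₙ` (convergence in `L¹`)
into `(1,q,w)`-atoms `aₙ` with `Σ |λₙ| ≤ C`, where `C` depends only on `d, q, ε, δ₀`. -/
theorem stmt_8 (d : ℕ) (hd : 3 ≤ d) (q ε δ₀ : ℝ) (hq : 1 < q) (hε : 0 < ε)
    (hδ₀ : 0 < δ₀) (hδ₀1 : δ₀ ≤ 1) :
    ∃ C > 0, ∀ w : EuclideanSpace ℝ (Fin d) → ℝ, Measurable w →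
      (∀ᵐ x : EuclideanSpace ℝ (Fin d), δ₀ ≤ w x ∧ w x ≤ 1) →
      ∀ (x₀ : EuclideanSpace ℝ (Fin d)) (r : ℝ), 0 < r →
      ∀ b : EuclideanSpace ℝ (Fin d) → ℂ, Measurable b →
      -- size estimate on the ball B(x₀, r)
      (∫⁻ x in Metric.ball x₀ r, ENNReal.ofReal ‖b x‖ ^ q) ^ (1 / q) ≤
        volume (Metric.ball x₀ r) ^ (1 / q - 1) →
      -- size estimates on the annuli 2ᵏB ∖ 2ᵏ⁻¹B
      (∀ k : ℕ, 1 ≤ k →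
        (∫⁻ x in Metric.ball x₀ (2 ^ k * r) \ Metric.ball x₀ (2 ^ (k - 1) * r),
            ENNReal.ofReal ‖b x‖ ^ q) ^ (1 / q) ≤
          volume (Metric.ball x₀ (2 ^ k * r)) ^ (1 / q - 1) *
            ENNReal.ofReal ((2 : ℝ) ^ (-ε * k))) →
      -- cancellation against the weight w
      (∫ x, b x * (w x : ℂ)) = 0 →
      ∃ (Λ : ℕ → ℂ) (a : ℕ → EuclideanSpace ℝ (Fin d) → ℂ),
        -- each aₙ is a (1,q,w)-atom
        (∀ n : ℕ, ∃ (y : EuclideanSpace ℝ (Fin d)) (ρ : ℝ), 0 < ρ ∧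
          Function.support (a n) ⊆ Metric.ball y ρ ∧
          (∫⁻ x, ENNReal.ofReal ‖a n x‖ ^ q) ^ (1 / q) ≤
            volume (Metric.ball y ρ) ^ (1 / q - 1) ∧
          (∫ x, a n x * (w x : ℂ)) = 0) ∧
        -- ∑ |λₙ| ≤ C
        Summable (fun n => ‖Λ n‖) ∧ (∑' n, ‖Λ n‖) ≤ C ∧
        -- b = ∑ λₙ aₙ with convergence in L¹
        Filter.Tendsto
          (fun N : ℕ => ∫ x, ‖b x - ∑ n ∈ Finset.range N, Λ n * a n x‖)
          Filter.atTop (nhds 0) := by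
  classical
  set E := EuclideanSpace ℝ (Fin d) with hE
  haveI : Nonempty (Fin d) := ⟨⟨0, by omega⟩⟩
  have hq0 : (0:ℝ) < q := lt_trans one_pos hq
  -- geometric ratio
  set ρ : ℝ := (2:ℝ) ^ (-ε) with hρdef
  have hρ0 : 0 < ρ := Real.rpow_pos_of_pos (by norm_num) _
  have hρ1 : ρ < 1 := Real.rpow_lt_one_of_one_lt_of_neg (by norm_num) (by linarith)
  have h1ρ : (0:ℝ) < 1 - ρ := by linarith
  -- the master constant
  set K : ℝ := 2^d * (1 + δ₀⁻¹ + 2 * δ₀⁻¹ * (1-ρ)⁻¹) with hKdef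
  have hK0 : 0 < K := by positivity
  refine ⟨K * (1-ρ)⁻¹, by positivity, ?_⟩
  intro w hw hwb x₀ r hr b hb hball hann hcancel
  -- exponent bookkeeping
  set p : ℝ≥0∞ := ENNReal.ofReal q with hpdef
  have hpt : p.toReal = q := ENNReal.toReal_ofReal hq0.le
  have hp0 : p ≠ 0 := by
    simp [hpdef, ENNReal.ofReal_eq_zero, not_le, hq0]
  have hptop : p ≠ ∞ := ENNReal.ofReal_ne_top
  have hp1 : 1 ≤ p := by
    rw [hpdef, ← ENNReal.ofReal_one]
    exact ENNReal.ofReal_le_ofReal hq.le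
  have norm_eq : ∀ (f : E → ℂ) (μ : Measure E),
      (∫⁻ x, ENNReal.ofReal ‖f x‖ ^ q ∂μ) ^ (1/q) = eLpNorm f p μ := by
    intro f μ
    rw [eLpNorm_eq_lintegral_rpow_enorm_toReal hp0 hptop, hpt]
    congr 1
    refine lintegral_congr fun x => ?_
    rw [ofReal_norm]
  -- the balls
  set B : ℕ → Set E := fun k => Metric.ball x₀ (2^k * r) with hBdef
  have hBmeas : ∀ k, MeasurableSet (B k) := fun k => measurableSet_ball
  have hrk : ∀ k : ℕ, (0:ℝ) < 2^k * r := fun k => by positivity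
  have hBmono : Monotone B := by
    intro i j hij
    exact Metric.ball_subset_ball (by
      have : (2:ℝ)^i ≤ 2^j := pow_le_pow_right₀ (by norm_num) hij
      nlinarith)
  have hV0 : ∀ k, volume (B k) ≠ 0 := fun k =>
    (Metric.measure_ball_pos volume x₀ (hrk k)).ne'
  have hVtop : ∀ k, volume (B k) ≠ ∞ := fun k => measure_ball_lt_top.ne
  have hVsucc : ∀ k, volume (B (k+1)) = ENNReal.ofReal (2^d) * volume (B k) := by
    intro k
    have h1 : volume (B (k+1)) = ENNReal.ofReal ((2^(k+1)*r) ^ d) *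
        volume (Metric.ball (0:E) 1) := by
      have := Measure.addHaar_ball (μ := (volume : Measure E)) x₀ (hrk (k+1)).le
      rwa [show Module.finrank ℝ E = d from finrank_euclideanSpace_fin] at this
    have h2 : volume (B k) = ENNReal.ofReal ((2^k*r) ^ d) *
        volume (Metric.ball (0:E) 1) := by
      have := Measure.addHaar_ball (μ := (volume : Measure E)) x₀ (hrk k).le
      rwa [show Module.finrank ℝ E = d from finrank_euclideanSpace_fin] at this
    rw [h1, h2, ← mul_assoc, ← ENNReal.ofReal_mul (by positivity)]
    congr 2
    ring
  -- the disjointed annuli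
  set A : ℕ → Set E := disjointed B with hAdef
  have hA0 : A 0 = B 0 := disjointed_zero B
  have hAsucc : ∀ k, A (k+1) = B (k+1) \ B k := fun k => by simpa using hBmono.disjointed_succ (not_isMax k)
  have hAmeas : ∀ k, MeasurableSet (A k) := MeasurableSet.disjointed hBmeas
  have hAdisj : Pairwise (Function.onFun Disjoint A) := disjoint_disjointed B
  have hAsub : ∀ k, A k ⊆ B k := fun k => disjointed_le B k
  have hBunion : ⋃ k, B k = Set.univ := by
    refine Set.eq_univ_iff_forall.mpr fun x => ?_
    obtain ⟨n, hn⟩ := pow_unbounded_of_one_lt (dist x x₀ / r) (y := (2:ℝ)) (by norm_num)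
    refine Set.mem_iUnion.mpr ⟨n, ?_⟩
    have : dist x x₀ < 2^n * r := by
      rw [div_lt_iff₀ hr] at hn; linarith
    simpa [hBdef, Metric.mem_ball] using this
  have hAunion : ⋃ k, A k = Set.univ := by
    rw [hAdef, iUnion_disjointed, hBunion]
  -- L^q bound on the annuli
  have hρk : ∀ k : ℕ, ENNReal.ofReal ((2:ℝ) ^ (-ε * (k:ℕ))) = ENNReal.ofReal (ρ ^ k) := by
    intro k
    congr 1
    rw [hρdef, ← Real.rpow_natCast ((2:ℝ) ^ (-ε)) k, ← Real.rpow_mul (by norm_num)]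
  have hAnn : ∀ k, eLpNorm b p (volume.restrict (A k)) ≤
      volume (B k) ^ (1/q - 1) * ENNReal.ofReal (ρ ^ k) := by
    intro k
    cases k with
    | zero =>
      have hA0' : A 0 = Metric.ball x₀ r := by
        rw [hA0]
        show Metric.ball x₀ (2^(0:ℕ) * r) = Metric.ball x₀ r
        norm_num
      rw [← norm_eq b, hA0']
      have hB0 : volume (B 0) = volume (Metric.ball x₀ r) := by
        show volume (Metric.ball x₀ (2^(0:ℕ) * r)) = _
        norm_num
      rw [hB0]
      simpa using hball
    | succ n =>
      have h := hann (n+1) (Nat.succ_le_succ (Nat.zero_le n))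
      rw [← hρk (n+1)]
      rw [← norm_eq b, hAsucc n]
      have hidx : Metric.ball x₀ (2 ^ ((n+1) - 1) * r) = B n := by
        norm_num [hBdef]
      rw [hidx] at h
      exact h
  -- L¹ bound on the annuli
  have hexp : (0:ℝ) ≤ 1 - 1/q := by
    have : 1/q ≤ 1 := by
      rw [div_le_one hq0]; linarith
    linarith
  have hAnn1 : ∀ k, (∫⁻ x in A k, (‖b x‖₊ : ℝ≥0∞)) ≤ ENNReal.ofReal (ρ ^ k) := by
    intro k
    have h0 : (∫⁻ x in A k, (‖b x‖₊ : ℝ≥0∞)) = eLpNorm b 1 (volume.restrict (A k)) :=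
      by rw [eLpNorm_one_eq_lintegral_enorm]; rfl
    rw [h0]
    calc eLpNorm b 1 (volume.restrict (A k))
        ≤ eLpNorm b p (volume.restrict (A k)) *
          (volume.restrict (A k) Set.univ) ^ (1/(1:ℝ≥0∞).toReal - 1/p.toReal) :=
          eLpNorm_le_eLpNorm_mul_rpow_measure_univ hp1 hb.aestronglyMeasurable
      _ ≤ (volume (B k) ^ (1/q - 1) * ENNReal.ofReal (ρ ^ k)) * volume (B k) ^ (1 - 1/q) := by
          have e1 : volume.restrict (A k) Set.univ = volume (A k) := by
            simp [Measure.restrict_apply_univ]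
          rw [e1, hpt]
          simp only [ENNReal.toReal_one]
          have e2 : 1/(1:ℝ) - 1/q = 1 - 1/q := by norm_num
          rw [e2]
          exact mul_le_mul' (hAnn k)
            (ENNReal.rpow_le_rpow (measure_mono (hAsub k)) hexp)
      _ = ENNReal.ofReal (ρ ^ k) := by
          rw [mul_comm (volume (B k) ^ (1/q - 1)) _, mul_assoc,
            ← ENNReal.rpow_add _ _ (hV0 k) (hVtop k)]
          have : 1/q - 1 + (1 - 1/q) = 0 := by ring
          rw [this, ENNReal.rpow_zero, mul_one]
  -- tail geometric sums
  have hgeo : ∀ N : ℕ, (∑' j : ℕ, ENNReal.ofReal (ρ ^ (N + j)))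
      = ENNReal.ofReal (ρ ^ N * (1-ρ)⁻¹) := by
    intro N
    have hsum : Summable (fun j : ℕ => ρ ^ (N + j)) := by
      simpa [pow_add] using (summable_geometric_of_lt_one hρ0.le hρ1).mul_left (ρ ^ N)
    rw [← ENNReal.ofReal_tsum_of_nonneg (fun j => by positivity) hsum]
    congr 1
    calc (∑' j : ℕ, ρ ^ (N + j)) = ∑' j : ℕ, ρ ^ N * ρ ^ j :=
          tsum_congr fun j => pow_add ρ N j
      _ = ρ ^ N * ∑' j : ℕ, ρ ^ j := tsum_mul_left
      _ = ρ ^ N * (1-ρ)⁻¹ := by rw [tsum_geometric_of_lt_one hρ0.le hρ1]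
  -- b is integrable
  have hbint : Integrable b := by
    refine ⟨hb.aestronglyMeasurable, ?_⟩
    show (∫⁻ x, (‖b x‖₊ : ℝ≥0∞)) < ⊤
    have h1 : (∫⁻ x, (‖b x‖₊ : ℝ≥0∞)) = ∑' k, ∫⁻ x in A k, (‖b x‖₊ : ℝ≥0∞) := by
      rw [← lintegral_iUnion hAmeas hAdisj, hAunion, Measure.restrict_univ]
    rw [h1]
    calc (∑' k, ∫⁻ x in A k, (‖b x‖₊ : ℝ≥0∞)) ≤ ∑' k : ℕ, ENNReal.ofReal (ρ ^ k) :=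
          ENNReal.tsum_le_tsum hAnn1
      _ = ENNReal.ofReal (ρ ^ 0 * (1-ρ)⁻¹) := by simpa using hgeo 0
      _ < ⊤ := ENNReal.ofReal_lt_top
  -- b ⬝ w is integrable
  have hwae : ∀ᵐ x, ‖((w x : ℝ) : ℂ)‖ ≤ 1 := by
    filter_upwards [hwb] with x hx
    rw [Complex.norm_real, Real.norm_eq_abs, abs_of_pos (lt_of_lt_of_le hδ₀ hx.1)]
    exact hx.2
  have hbw : Integrable (fun x => b x * (w x : ℂ)) := by
    apply Integrable.mono' hbint.norm
      ((hb.mul ((Complex.measurable_ofReal.comp hw) :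
        Measurable fun x => ((w x : ℝ) : ℂ))).aestronglyMeasurable)
    filter_upwards [hwae] with x hx
    rw [Pi.mul_apply, norm_mul]
    simp only [Function.comp_apply]
    nlinarith [norm_nonneg (b x), norm_nonneg ((w x : ℝ) : ℂ)]
  -- the coefficients m and tails M
  set m : ℕ → ℂ := fun k => ∫ x in A k, b x * (w x : ℂ) with hmdef
  have hm_bound : ∀ k, ‖m k‖ ≤ ρ ^ k := by
    intro k
    have hstep1 : ‖m k‖ ≤ ∫ x in A k, ‖b x * (w x : ℂ)‖ := norm_integral_le_integral_norm _
    have hstep2 : (∫ x in A k, ‖b x * (w x : ℂ)‖) ≤ ∫ x in A k, ‖b x‖ := by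
      apply integral_mono_ae hbw.norm.integrableOn hbint.norm.integrableOn
      apply ae_restrict_of_ae
      filter_upwards [hwae] with x hx
      rw [norm_mul]
      nlinarith [norm_nonneg (b x), norm_nonneg ((w x : ℝ) : ℂ)]
    have hstep3 : (∫ x in A k, ‖b x‖) ≤ ρ ^ k := by
      rw [integral_norm_eq_lintegral_enorm hb.aestronglyMeasurable.restrict]
      have h := ENNReal.toReal_mono ENNReal.ofReal_ne_top (hAnn1 k)
      rw [ENNReal.toReal_ofReal (by positivity : (0:ℝ) ≤ ρ ^ k)] at h
      exact h
    linarith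
  have hm_summable : Summable m :=
    Summable.of_norm (Summable.of_nonneg_of_le (fun k => norm_nonneg _) hm_bound
      (summable_geometric_of_lt_one hρ0.le hρ1))
  have hm_hasSum : HasSum m 0 := by
    have h := hasSum_integral_iUnion (μ := volume) hAmeas hAdisj
      (hbw.integrableOn : IntegrableOn (fun x => b x * (w x : ℂ)) (⋃ k, A k) volume)
    rw [hAunion, Measure.restrict_univ, hcancel] at h
    exact h
  set M : ℕ → ℂ := fun k => ∑' j : ℕ, m (k + j) with hMdef
  have hshift : ∀ k, Summable (fun j : ℕ => m (k + j)) := by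
    intro k
    have h := (summable_nat_add_iff k).mpr hm_summable
    apply h.congr
    intro j
    rw [add_comm]
  have hM0 : M 0 = 0 := by
    have h1 : M 0 = ∑' j : ℕ, m j := tsum_congr fun j => by rw [zero_add]
    rw [h1, hm_hasSum.tsum_eq]
  have hMrec : ∀ k, M k = m k + M (k+1) := by
    intro k
    calc M k = ∑' j : ℕ, m (k + j) := rfl
      _ = m (k + 0) + ∑' j : ℕ, m (k + (j + 1)) := (hshift k).tsum_eq_zero_add
      _ = m k + M (k+1) := by
          rw [add_zero]
          congr 1
          exact tsum_congr fun j => by rw [show k + (j+1) = (k+1)+j by ring]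
  have hM_bound : ∀ k, ‖M k‖ ≤ ρ ^ k * (1-ρ)⁻¹ := by
    intro k
    have hsg : Summable (fun j : ℕ => ρ ^ (k + j)) := by
      simpa [pow_add] using (summable_geometric_of_lt_one hρ0.le hρ1).mul_left (ρ ^ k)
    have hsn : Summable (fun j : ℕ => ‖m (k + j)‖) :=
      Summable.of_nonneg_of_le (fun j => norm_nonneg _) (fun j => hm_bound _) hsg
    calc ‖M k‖ ≤ ∑' j : ℕ, ‖m (k + j)‖ := norm_tsum_le_tsum_norm hsn
      _ ≤ ∑' j : ℕ, ρ ^ (k + j) := Summable.tsum_le_tsum (fun j => hm_bound _) hsn hsg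
      _ = ρ ^ k * (1-ρ)⁻¹ := by
          simp_rw [pow_add]
          rw [tsum_mul_left, tsum_geometric_of_lt_one hρ0.le hρ1]
  -- the weight masses and bump functions
  have hwInt : ∀ k, IntegrableOn w (B k) := by
    intro k
    refine ⟨hw.aestronglyMeasurable.restrict, ?_⟩
    show (∫⁻ x in B k, (‖w x‖₊ : ℝ≥0∞)) < ⊤
    have hb1 : ∀ᵐ x ∂(volume.restrict (B k)), (‖w x‖₊ : ℝ≥0∞) ≤ 1 := by
      apply ae_restrict_of_ae
      filter_upwards [hwb] with x hx
      rw [← enorm_eq_nnnorm, ← ofReal_norm, Real.norm_eq_abs,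
        abs_of_pos (lt_of_lt_of_le hδ₀ hx.1)]
      exact ENNReal.ofReal_le_one.mpr hx.2
    calc (∫⁻ x in B k, (‖w x‖₊ : ℝ≥0∞)) ≤ ∫⁻ _x in B k, 1 := lintegral_mono_ae hb1
      _ = volume (B k) := by simp
      _ < ⊤ := (hVtop k).lt_top
  set W : ℕ → ℝ := fun k => ∫ x in B k, w x with hWdef
  have hWlb : ∀ k, δ₀ * (volume (B k)).toReal ≤ W k := by
    intro k
    have h1 : (∫ _x in B k, δ₀) ≤ ∫ x in B k, w x := by
      apply integral_mono_ae (integrableOn_const (C := δ₀) (hVtop k)) (hwInt k)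
      exact ae_restrict_of_ae (hwb.mono fun x hx => hx.1)
    rw [setIntegral_const, smul_eq_mul, mul_comm] at h1
    exact h1
  have hVtR : ∀ k, 0 < (volume (B k)).toReal :=
    fun k => ENNReal.toReal_pos (hV0 k) (hVtop k)
  have hWpos : ∀ k, 0 < W k := fun k =>
    lt_of_lt_of_le (mul_pos hδ₀ (hVtR k)) (hWlb k)
  set g : ℕ → E → ℂ := fun k => (B k).indicator (fun _ => (((W k)⁻¹ : ℝ) : ℂ)) with hgdef
  have hgInt : ∀ k, Integrable (g k) := by
    intro k
    show Integrable ((B k).indicator fun _ => (((W k)⁻¹ : ℝ) : ℂ))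
    rw [integrable_indicator_iff (hBmeas k)]
    exact integrableOn_const (hVtop k)
  have hg_supp : ∀ k x, x ∉ B k → g k x = 0 := by
    intro k x hx
    simp [hgdef, Set.indicator_of_notMem hx]
  have hg_cancel : ∀ k, (∫ x, g k x * (w x : ℂ)) = 1 := by
    intro k
    have h1 : (fun x => g k x * (w x : ℂ)) =
        (B k).indicator (fun x => (((W k)⁻¹ : ℝ) : ℂ) * (w x : ℂ)) := by
      funext x
      by_cases hx : x ∈ B k <;> simp [hgdef, hx]
    rw [h1, integral_indicator (hBmeas k), integral_const_mul]
    have h2 : (∫ x in B k, ((w x : ℝ) : ℂ)) = ((W k : ℝ) : ℂ) := integral_ofReal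
    rw [h2, ← Complex.ofReal_mul, inv_mul_cancel₀ (hWpos k).ne', Complex.ofReal_one]
  have hg_Lq : ∀ k, eLpNorm (g k) p volume ≤
      ENNReal.ofReal δ₀⁻¹ * volume (B k) ^ (1/q - 1) := by
    intro k
    have h1 : eLpNorm (g k) p volume =
        (‖(((W k)⁻¹ : ℝ) : ℂ)‖₊ : ℝ≥0∞) * volume (B k) ^ (1 / p.toReal) := by
      show eLpNorm ((B k).indicator fun _ => (((W k)⁻¹ : ℝ) : ℂ)) p volume = _
      exact eLpNorm_indicator_const (hBmeas k) hp0 hptop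
    rw [h1, hpt]
    have h2 : (‖(((W k)⁻¹ : ℝ) : ℂ)‖₊ : ℝ≥0∞) = ENNReal.ofReal (W k)⁻¹ := by
      rw [← enorm_eq_nnnorm, ← ofReal_norm, Complex.norm_real, Real.norm_eq_abs,
        abs_of_pos (inv_pos.mpr (hWpos k))]
    rw [h2]
    have h3 : ENNReal.ofReal (W k)⁻¹ ≤ ENNReal.ofReal δ₀⁻¹ * (volume (B k))⁻¹ := by
      have hr1 : (W k)⁻¹ ≤ δ₀⁻¹ * ((volume (B k)).toReal)⁻¹ := by
        rw [← mul_inv]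
        exact inv_anti₀ (mul_pos hδ₀ (hVtR k)) (hWlb k)
      calc ENNReal.ofReal (W k)⁻¹ ≤ ENNReal.ofReal (δ₀⁻¹ * ((volume (B k)).toReal)⁻¹) :=
            ENNReal.ofReal_le_ofReal hr1
        _ = ENNReal.ofReal δ₀⁻¹ * ENNReal.ofReal ((volume (B k)).toReal)⁻¹ :=
            ENNReal.ofReal_mul (by positivity)
        _ = ENNReal.ofReal δ₀⁻¹ * (volume (B k))⁻¹ := by
            rw [ENNReal.ofReal_inv_of_pos (hVtR k), ENNReal.ofReal_toReal (hVtop k)]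
    calc ENNReal.ofReal (W k)⁻¹ * volume (B k) ^ (1/q)
        ≤ (ENNReal.ofReal δ₀⁻¹ * (volume (B k))⁻¹) * volume (B k) ^ (1/q) :=
          _root_.mul_le_mul_left h3 _
      _ = ENNReal.ofReal δ₀⁻¹ * ((volume (B k))⁻¹ * volume (B k) ^ (1/q)) := mul_assoc _ _ _
      _ = ENNReal.ofReal δ₀⁻¹ * volume (B k) ^ (1/q - 1) := by
          congr 1
          rw [← ENNReal.rpow_neg_one (volume (B k)),
            ← ENNReal.rpow_add _ _ (hV0 k) (hVtop k)]
          congr 1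
          ring
  have hg_L1 : ∀ k, (∫ x, ‖g k x‖) ≤ δ₀⁻¹ := by
    intro k
    have h1 : (fun x => ‖g k x‖) = (B k).indicator (fun _ => (W k)⁻¹) := by
      funext x
      by_cases hx : x ∈ B k <;>
        simp [hgdef, hx, Complex.norm_real, Real.norm_eq_abs,
          abs_of_pos (inv_pos.mpr (hWpos k)), (hWpos k).le]
    rw [h1, integral_indicator (hBmeas k), setIntegral_const, smul_eq_mul]
    have h2 : (W k)⁻¹ ≤ (δ₀ * (volume (B k)).toReal)⁻¹ :=
      inv_anti₀ (mul_pos hδ₀ (hVtR k)) (hWlb k)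
    calc (volume (B k)).toReal * (W k)⁻¹
        ≤ (volume (B k)).toReal * (δ₀ * (volume (B k)).toReal)⁻¹ :=
          mul_le_mul_of_nonneg_left h2 (hVtR k).le
      _ = δ₀⁻¹ := by
          rw [mul_inv, ← mul_assoc, mul_comm ((volume (B k)).toReal) δ₀⁻¹, mul_assoc,
            mul_inv_cancel₀ (hVtR k).ne', mul_one]
  -- the pre-atoms
  set c : ℕ → E → ℂ := fun k x => (A k).indicator b x - m k * g k x +
      (M (k+1) * g (k+1) x - M (k+1) * g k x) with hcdef
  have hc_supp : ∀ k x, x ∉ B (k+1) → c k x = 0 := by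
    intro k x hx
    have h1 : x ∉ B k := fun h => hx (hBmono (Nat.le_succ k) h)
    have h2 : x ∉ A k := fun h => h1 (hAsub k h)
    simp [hcdef, Set.indicator_of_notMem h2, hg_supp k x h1, hg_supp (k+1) x hx]
  have hc_int : ∀ k, Integrable (c k) := by
    intro k
    exact (((hbint.indicator (hAmeas k)).sub ((hgInt k).const_mul _)).add
      (((hgInt (k+1)).const_mul _).sub ((hgInt k).const_mul _)))
  have hgw : ∀ j, Integrable (fun x => g j x * (w x : ℂ)) := by
    intro j
    apply Integrable.mono' (hgInt j).norm
      ((((measurable_const.indicator (hBmeas j)) :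
          Measurable ((B j).indicator fun _ => (((W j)⁻¹ : ℝ) : ℂ))).mul
        ((Complex.measurable_ofReal.comp hw) :
          Measurable fun x => ((w x : ℝ) : ℂ))).aestronglyMeasurable)
    filter_upwards [hwae] with x hx
    rw [Pi.mul_apply, norm_mul]
    simp only [Function.comp_apply]
    have hg0 : (0:ℝ) ≤ ‖(B j).indicator (fun _ => (((W j)⁻¹ : ℝ) : ℂ)) x‖ := norm_nonneg _
    show ‖(B j).indicator (fun _ => (((W j)⁻¹ : ℝ) : ℂ)) x‖ * ‖((w x : ℝ) : ℂ)‖ ≤ ‖g j x‖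
    have : ‖g j x‖ = ‖(B j).indicator (fun _ => (((W j)⁻¹ : ℝ) : ℂ)) x‖ := rfl
    rw [this]
    nlinarith [norm_nonneg ((w x : ℝ) : ℂ), mul_le_mul_of_nonneg_left (show ‖((w x : ℝ) : ℂ)‖ ≤ 1 from hx) hg0]
  have hc_cancel : ∀ k, (∫ x, c k x * (w x : ℂ)) = 0 := by
    intro k
    have hind : (fun x => (A k).indicator b x * (w x : ℂ)) =
        (A k).indicator (fun x => b x * (w x : ℂ)) := by
      funext x
      by_cases hx : x ∈ A k <;> simp [hx]
    have i1 : Integrable (fun x => (A k).indicator b x * (w x : ℂ)) := by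
      rw [hind]; exact hbw.indicator (hAmeas k)
    have e1 : (∫ x, (A k).indicator b x * (w x : ℂ)) = m k := by
      rw [hind, integral_indicator (hAmeas k)]
    have hsplit : (fun x => c k x * (w x : ℂ)) = fun x =>
        ((A k).indicator b x * (w x : ℂ) - m k * (g k x * (w x : ℂ)))
        + (M (k+1) * (g (k+1) x * (w x : ℂ)) - M (k+1) * (g k x * (w x : ℂ))) := by
      funext x
      simp only [hcdef]
      ring
    calc (∫ x, c k x * (w x : ℂ))
        = ∫ x, (((A k).indicator b x * (w x : ℂ) - m k * (g k x * (w x : ℂ)))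
            + (M (k+1) * (g (k+1) x * (w x : ℂ)) - M (k+1) * (g k x * (w x : ℂ)))) := by
          rw [hsplit]
      _ = (∫ x, ((A k).indicator b x * (w x : ℂ) - m k * (g k x * (w x : ℂ))))
          + ∫ x, (M (k+1) * (g (k+1) x * (w x : ℂ)) - M (k+1) * (g k x * (w x : ℂ))) :=
          integral_add (i1.sub ((hgw k).const_mul _))
            (((hgw (k+1)).const_mul _).sub ((hgw k).const_mul _))
      _ = ((∫ x, (A k).indicator b x * (w x : ℂ)) - ∫ x, m k * (g k x * (w x : ℂ)))
          + ((∫ x, M (k+1) * (g (k+1) x * (w x : ℂ)))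
             - ∫ x, M (k+1) * (g k x * (w x : ℂ))) :=
          congrArg₂ (· + ·) (integral_sub i1 ((hgw k).const_mul _))
            (integral_sub ((hgw (k+1)).const_mul _) ((hgw k).const_mul _))
      _ = (m k - m k * (∫ x, g k x * (w x : ℂ)))
          + (M (k+1) * (∫ x, g (k+1) x * (w x : ℂ))
             - M (k+1) * (∫ x, g k x * (w x : ℂ))) := by
          rw [integral_const_mul, integral_const_mul, integral_const_mul, e1]
      _ = 0 := by
          rw [hg_cancel k, hg_cancel (k+1)]
          ring
  have h2d0 : ENNReal.ofReal ((2:ℝ)^d) ≠ 0 := by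
    rw [Ne, ENNReal.ofReal_eq_zero, not_le]
    positivity
  have h2d1 : (1:ℝ≥0∞) ≤ ENNReal.ofReal ((2:ℝ)^d) := by
    rw [← ENNReal.ofReal_one]
    exact ENNReal.ofReal_le_ofReal (one_le_pow₀ (by norm_num))
  have hVconv : ∀ k, volume (B k) ^ (1/q - 1) ≤
      ENNReal.ofReal ((2:ℝ)^d) * volume (B (k+1)) ^ (1/q - 1) := by
    intro k
    have h1 : volume (B (k+1)) ^ (1/q - 1) =
        (ENNReal.ofReal ((2:ℝ)^d)) ^ (1/q - 1) * volume (B k) ^ (1/q - 1) := by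
      rw [hVsucc k, ENNReal.mul_rpow_of_ne_top ENNReal.ofReal_ne_top (hVtop k)]
    have h2 : volume (B k) ^ (1/q - 1) =
        (ENNReal.ofReal ((2:ℝ)^d)) ^ (1 - 1/q) * volume (B (k+1)) ^ (1/q - 1) := by
      rw [h1, ← mul_assoc, ← ENNReal.rpow_add _ _ h2d0 ENNReal.ofReal_ne_top]
      have he : 1 - 1/q + (1/q - 1) = 0 := by ring
      rw [he, ENNReal.rpow_zero, one_mul]
    rw [h2]
    refine _root_.mul_le_mul_left ?_ _
    calc (ENNReal.ofReal ((2:ℝ)^d)) ^ (1 - 1/q)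
        ≤ (ENNReal.ofReal ((2:ℝ)^d)) ^ (1:ℝ) :=
          ENNReal.rpow_le_rpow_of_exponent_le h2d1 (by
            have : (0:ℝ) ≤ 1/q := by positivity
            linarith)
      _ = ENNReal.ofReal ((2:ℝ)^d) := ENNReal.rpow_one _
  have hc_Lq : ∀ k, eLpNorm (c k) p volume ≤
      ENNReal.ofReal (K * ρ ^ k) * volume (B (k+1)) ^ (1/q - 1) := by
    intro k
    have hf1 : AEStronglyMeasurable ((A k).indicator b) volume :=
      (hb.indicator (hAmeas k)).aestronglyMeasurable
    have hgm : ∀ j, AEStronglyMeasurable (g j) volume := fun j =>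
      ((measurable_const.indicator (hBmeas j)) :
        Measurable ((B j).indicator fun _ => (((W j)⁻¹ : ℝ) : ℂ))).aestronglyMeasurable
    have hT2 : ∀ (z : ℂ) (jj : ℕ), eLpNorm (fun x => z * g jj x) p volume
        ≤ ENNReal.ofReal ‖z‖ * (ENNReal.ofReal δ₀⁻¹ * volume (B jj) ^ (1/q - 1)) := by
      intro z jj
      calc eLpNorm (fun x => z * g jj x) p volume
          = (‖z‖₊ : ℝ≥0∞) * eLpNorm (g jj) p volume := by
            rw [show (fun x => z * g jj x) = z • g jj from rfl, eLpNorm_const_smul]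
            try rw [ENNReal.smul_def, smul_eq_mul]
            rfl
        _ ≤ ENNReal.ofReal ‖z‖ * (ENNReal.ofReal δ₀⁻¹ * volume (B jj) ^ (1/q - 1)) := by
            rw [← enorm_eq_nnnorm, ← ofReal_norm]
            exact _root_.mul_le_mul_right (hg_Lq jj) _
    -- the key bound transfer: anything ≤ t * V_k^{1/q-1} is ≤ (t 2^d) * V_{k+1}^{1/q-1}
    have key : ∀ t : ℝ, 0 ≤ t → ENNReal.ofReal t * volume (B k) ^ (1/q - 1) ≤
        ENNReal.ofReal (t * 2^d) * volume (B (k+1)) ^ (1/q - 1) := by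
      intro t ht
      calc ENNReal.ofReal t * volume (B k) ^ (1/q - 1)
          ≤ ENNReal.ofReal t * (ENNReal.ofReal ((2:ℝ)^d) * volume (B (k+1)) ^ (1/q - 1)) :=
            _root_.mul_le_mul_right (hVconv k) _
        _ = ENNReal.ofReal (t * 2^d) * volume (B (k+1)) ^ (1/q - 1) := by
            rw [← mul_assoc, ← ENNReal.ofReal_mul ht]
    set X := volume (B (k+1)) ^ (1/q - 1) with hXdef
    have hb1 : eLpNorm ((A k).indicator b) p volume ≤ ENNReal.ofReal (ρ^k * 2^d) * X := by
      refine le_trans ?_ (key (ρ^k) (by positivity))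
      rw [eLpNorm_indicator_eq_eLpNorm_restrict (hAmeas k), mul_comm]
      exact hAnn k
    have hb2 : eLpNorm (fun x => m k * g k x) p volume ≤
        ENNReal.ofReal (ρ^k * δ₀⁻¹ * 2^d) * X := by
      refine le_trans (hT2 (m k) k) ?_
      refine le_trans ?_ (key (ρ^k * δ₀⁻¹) (by positivity))
      rw [← mul_assoc, ← ENNReal.ofReal_mul (norm_nonneg _)]
      exact _root_.mul_le_mul_left (ENNReal.ofReal_le_ofReal
        (mul_le_mul_of_nonneg_right (hm_bound k) (by positivity))) _
    have hMb : ‖M (k+1)‖ ≤ ρ^k * (1-ρ)⁻¹ := by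
      refine le_trans (hM_bound (k+1)) ?_
      have hpk : ρ^(k+1) ≤ ρ^k := by
        rw [pow_succ]
        nlinarith [pow_pos hρ0 k]
      exact mul_le_mul_of_nonneg_right hpk (le_of_lt (inv_pos.mpr h1ρ))
    have hb3 : eLpNorm (fun x => M (k+1) * g (k+1) x) p volume ≤
        ENNReal.ofReal (ρ^k * (1-ρ)⁻¹ * δ₀⁻¹ * 2^d) * X := by
      refine le_trans (hT2 (M (k+1)) (k+1)) ?_
      rw [← mul_assoc, ← ENNReal.ofReal_mul (norm_nonneg _)]
      have h1 : ‖M (k+1)‖ * δ₀⁻¹ ≤ ρ^k * (1-ρ)⁻¹ * δ₀⁻¹ * 2^d := by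
        have h2d : (1:ℝ) ≤ 2^d := one_le_pow₀ (by norm_num)
        have hδi : (0:ℝ) ≤ δ₀⁻¹ := by positivity
        nlinarith [mul_le_mul_of_nonneg_right hMb hδi,
          mul_pos (mul_pos (pow_pos hρ0 k) (inv_pos.mpr h1ρ)) (inv_pos.mpr hδ₀)]
      exact _root_.mul_le_mul_left (ENNReal.ofReal_le_ofReal h1) _
    have hb4 : eLpNorm (fun x => M (k+1) * g k x) p volume ≤
        ENNReal.ofReal (ρ^k * (1-ρ)⁻¹ * δ₀⁻¹ * 2^d) * X := by
      refine le_trans (hT2 (M (k+1)) k) ?_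
      refine le_trans ?_ (key (ρ^k * (1-ρ)⁻¹ * δ₀⁻¹) (by positivity))
      rw [← mul_assoc, ← ENNReal.ofReal_mul (norm_nonneg _)]
      exact _root_.mul_le_mul_left (ENNReal.ofReal_le_ofReal
        (mul_le_mul_of_nonneg_right hMb (by positivity))) _
    have htri : eLpNorm (c k) p volume ≤
        (eLpNorm ((A k).indicator b) p volume + eLpNorm (fun x => m k * g k x) p volume)
        + (eLpNorm (fun x => M (k+1) * g (k+1) x) p volume
           + eLpNorm (fun x => M (k+1) * g k x) p volume) := by
      have hm1 : AEStronglyMeasurable (fun x => m k * g k x) volume :=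
        (measurable_const.mul ((measurable_const.indicator (hBmeas k)) :
          Measurable ((B k).indicator fun _ => (((W k)⁻¹ : ℝ) : ℂ)))).aestronglyMeasurable
      have hm3 : AEStronglyMeasurable (fun x => M (k+1) * g (k+1) x) volume :=
        (measurable_const.mul ((measurable_const.indicator (hBmeas (k+1))) :
          Measurable ((B (k+1)).indicator fun _ => (((W (k+1))⁻¹ : ℝ) : ℂ)))).aestronglyMeasurable
      have hm4 : AEStronglyMeasurable (fun x => M (k+1) * g k x) volume :=
        (measurable_const.mul ((measurable_const.indicator (hBmeas k)) :
          Measurable ((B k).indicator fun _ => (((W k)⁻¹ : ℝ) : ℂ)))).aestronglyMeasurable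
      calc eLpNorm (c k) p volume
          ≤ eLpNorm (fun x => (A k).indicator b x - m k * g k x) p volume
            + eLpNorm (fun x => M (k+1) * g (k+1) x - M (k+1) * g k x) p volume := by
            exact eLpNorm_add_le (hf1.sub hm1) (hm3.sub hm4) hp1
        _ ≤ (eLpNorm ((A k).indicator b) p volume + eLpNorm (fun x => m k * g k x) p volume)
            + (eLpNorm (fun x => M (k+1) * g (k+1) x) p volume
               + eLpNorm (fun x => M (k+1) * g k x) p volume) :=
            add_le_add (eLpNorm_sub_le hf1 hm1 hp1) (eLpNorm_sub_le hm3 hm4 hp1)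
    refine le_trans htri ?_
    refine le_trans (add_le_add (add_le_add hb1 hb2) (add_le_add hb3 hb4)) ?_
    have hsum : ENNReal.ofReal (ρ^k * 2^d) * X + ENNReal.ofReal (ρ^k * δ₀⁻¹ * 2^d) * X
        + (ENNReal.ofReal (ρ^k * (1-ρ)⁻¹ * δ₀⁻¹ * 2^d) * X
           + ENNReal.ofReal (ρ^k * (1-ρ)⁻¹ * δ₀⁻¹ * 2^d) * X)
        = ENNReal.ofReal (K * ρ^k) * X := by
      rw [← add_mul, ← add_mul, ← add_mul]
      congr 1
      rw [← ENNReal.ofReal_add (by positivity) (by positivity),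
        ← ENNReal.ofReal_add (by positivity) (by positivity),
        ← ENNReal.ofReal_add (by positivity) (by positivity)]
      congr 1
      rw [hKdef]
      ring
    rw [hsum]
  -- the atoms
  have hΛpos : ∀ k : ℕ, 0 < K * ρ ^ k := fun k => by positivity
  set a : ℕ → E → ℂ := fun k => (((K * ρ ^ k)⁻¹ : ℝ) : ℂ) • c k with hadef
  have hΛa : ∀ k x, ((K * ρ ^ k : ℝ) : ℂ) * a k x = c k x := by
    intro k x
    simp only [hadef, Pi.smul_apply, smul_eq_mul, ← mul_assoc]
    rw [← Complex.ofReal_mul, mul_inv_cancel₀ (hΛpos k).ne']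
    simp
  -- partial sums telescope
  have hS : ∀ N x, (∑ n ∈ Finset.range (N+1), c n x) =
      (B N).indicator b x + M (N+1) * g (N+1) x := by
    intro N
    induction N with
    | zero =>
      intro x
      have hm0 : m 0 = -M 1 := by
        have h := hMrec 0
        rw [hM0] at h
        linear_combination -h
      simp only [zero_add, Finset.range_one, Finset.sum_singleton, hcdef]
      rw [hA0, hm0]
      ring
    | succ n ih =>
      intro x
      rw [Finset.sum_range_succ, ih x]
      have hBsplit : (B (n+1)).indicator b x =
          (B n).indicator b x + (A (n+1)).indicator b x := by
        have h1 : B n ∪ A (n+1) = B (n+1) := by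
          rw [hAsucc n]
          exact Set.union_diff_cancel (hBmono (Nat.le_succ n))
        have h2 : Disjoint (B n) (A (n+1)) := by
          rw [hAsucc n]
          exact Set.disjoint_sdiff_right
        conv_lhs => rw [← h1]
        exact congrFun (Set.indicator_union_of_disjoint h2 b) x
      have hrec : M (n+1) = m (n+1) + M (n+2) := hMrec (n+1)
      simp only [hcdef]
      rw [hBsplit, hrec]
      ring
  -- the L¹ error bound
  have hbound : ∀ N, (∫ x, ‖b x - ∑ n ∈ Finset.range (N+1), ((K * ρ ^ n : ℝ) : ℂ) * a n x‖)
      ≤ (1 + δ₀⁻¹) * (1-ρ)⁻¹ * ρ ^ (N+1) := by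
    intro N
    have hdiff : ∀ x, b x - ∑ n ∈ Finset.range (N+1), ((K * ρ ^ n : ℝ) : ℂ) * a n x
        = ((B N)ᶜ).indicator b x - M (N+1) * g (N+1) x := by
      intro x
      have h1 : (∑ n ∈ Finset.range (N+1), ((K * ρ ^ n : ℝ) : ℂ) * a n x)
          = ∑ n ∈ Finset.range (N+1), c n x := Finset.sum_congr rfl fun n _ => hΛa n x
      rw [h1, hS N x]
      have h2 : b x = (B N).indicator b x + ((B N)ᶜ).indicator b x :=
        (congrFun (Set.indicator_self_add_compl (B N) b) x).symm
      rw [h2]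
      ring
    have hint1 : Integrable (((B N)ᶜ).indicator b) := hbint.indicator (hBmeas N).compl
    have hint2 : Integrable (fun x => M (N+1) * g (N+1) x) := (hgInt (N+1)).const_mul _
    have h3 : (∫ x, ‖((B N)ᶜ).indicator b x‖) ≤ ρ^(N+1) * (1-ρ)⁻¹ := by
      have hsub : (B N)ᶜ ⊆ ⋃ j : ℕ, A (N+1+j) := by
        intro x hx
        have hxu : x ∈ ⋃ k, A k := by rw [hAunion]; trivial
        obtain ⟨t, ht⟩ := Set.mem_iUnion.mp hxu
        rcases le_or_gt t N with h | h
        · exact absurd (hBmono h (hAsub t ht)) hx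
        · refine Set.mem_iUnion.mpr ⟨t - (N+1), ?_⟩
          have he : N+1+(t-(N+1)) = t := by omega
          rw [he]
          exact ht
      have hlt : (∫⁻ x in (B N)ᶜ, (‖b x‖₊ : ℝ≥0∞)) ≤
          ENNReal.ofReal (ρ^(N+1) * (1-ρ)⁻¹) := by
        calc (∫⁻ x in (B N)ᶜ, (‖b x‖₊ : ℝ≥0∞))
            ≤ ∫⁻ x in ⋃ j : ℕ, A (N+1+j), (‖b x‖₊ : ℝ≥0∞) := lintegral_mono_set hsub
          _ ≤ ∑' j : ℕ, ∫⁻ x in A (N+1+j), (‖b x‖₊ : ℝ≥0∞) := lintegral_iUnion_le _ _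
          _ ≤ ∑' j : ℕ, ENNReal.ofReal (ρ^(N+1+j)) := ENNReal.tsum_le_tsum fun j => hAnn1 _
          _ = ENNReal.ofReal (ρ^(N+1) * (1-ρ)⁻¹) := hgeo (N+1)
      have he : (fun x => ‖((B N)ᶜ).indicator b x‖) = ((B N)ᶜ).indicator (fun x => ‖b x‖) := by
        funext x
        by_cases hx : x ∈ (B N)ᶜ <;> simp [hx]
      rw [he, integral_indicator (hBmeas N).compl,
        integral_norm_eq_lintegral_enorm hb.aestronglyMeasurable.restrict]
      have h := ENNReal.toReal_mono ENNReal.ofReal_ne_top hlt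
      rw [ENNReal.toReal_ofReal (by positivity)] at h
      exact h
    have h4 : (∫ x, ‖M (N+1) * g (N+1) x‖) ≤ ρ^(N+1) * (1-ρ)⁻¹ * δ₀⁻¹ := by
      have e4 : (∫ x, ‖M (N+1) * g (N+1) x‖) = ‖M (N+1)‖ * ∫ x, ‖g (N+1) x‖ := by
        simp_rw [norm_mul]
        exact integral_const_mul _ _
      rw [e4]
      exact mul_le_mul (hM_bound (N+1)) (hg_L1 (N+1))
        (integral_nonneg fun x => norm_nonneg _) (by positivity)
    calc (∫ x, ‖b x - ∑ n ∈ Finset.range (N+1), ((K * ρ ^ n : ℝ) : ℂ) * a n x‖)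
        = ∫ x, ‖((B N)ᶜ).indicator b x - M (N+1) * g (N+1) x‖ :=
          integral_congr_ae (Filter.Eventually.of_forall fun x => congrArg norm (hdiff x))
      _ ≤ ∫ x, (‖((B N)ᶜ).indicator b x‖ + ‖M (N+1) * g (N+1) x‖) := by
          apply integral_mono_ae (hint1.sub hint2).norm (hint1.norm.add hint2.norm)
          exact Filter.Eventually.of_forall fun x => norm_sub_le _ _
      _ = (∫ x, ‖((B N)ᶜ).indicator b x‖) + ∫ x, ‖M (N+1) * g (N+1) x‖ :=
          integral_add hint1.norm hint2.norm
      _ ≤ ρ^(N+1) * (1-ρ)⁻¹ + ρ^(N+1) * (1-ρ)⁻¹ * δ₀⁻¹ := add_le_add h3 h4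
      _ ≤ (1 + δ₀⁻¹) * (1-ρ)⁻¹ * ρ ^ (N+1) := le_of_eq (by ring)
  refine ⟨fun k => ((K * ρ ^ k : ℝ) : ℂ), a, ?_, ?_, ?_, ?_⟩
  · -- atom properties
    intro n
    refine ⟨x₀, 2^(n+1) * r, hrk (n+1), ?_, ?_, ?_⟩
    · intro x hx
      by_contra hxB
      exact hx (by
        show a n x = 0
        simp [hadef, hc_supp n x hxB])
    · rw [norm_eq (a n) volume]
      have h1 : eLpNorm (a n) p volume =
          (‖(((K * ρ ^ n)⁻¹ : ℝ) : ℂ)‖₊ : ℝ≥0∞) * eLpNorm (c n) p volume := by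
        rw [hadef]
        exact eLpNorm_const_smul _ _ _ _
      rw [h1]
      have h2 : (‖(((K * ρ ^ n)⁻¹ : ℝ) : ℂ)‖₊ : ℝ≥0∞) = ENNReal.ofReal (K * ρ ^ n)⁻¹ := by
        rw [← enorm_eq_nnnorm, ← ofReal_norm]
        congr 1
        rw [Complex.norm_real, Real.norm_eq_abs, abs_of_pos (by positivity)]
      rw [h2]
      calc ENNReal.ofReal (K * ρ ^ n)⁻¹ * eLpNorm (c n) p volume
          ≤ ENNReal.ofReal (K * ρ ^ n)⁻¹ *
            (ENNReal.ofReal (K * ρ ^ n) * volume (B (n+1)) ^ (1/q - 1)) :=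
            _root_.mul_le_mul_right (hc_Lq n) _
        _ = volume (B (n+1)) ^ (1/q - 1) := by
            rw [← mul_assoc, ← ENNReal.ofReal_mul (by positivity),
              inv_mul_cancel₀ (hΛpos n).ne', ENNReal.ofReal_one, one_mul]
    · have : ∀ x, a n x * (w x : ℂ) = (((K * ρ ^ n)⁻¹ : ℝ) : ℂ) * (c n x * (w x : ℂ)) := by
        intro x; simp [hadef, mul_assoc]
      rw [integral_congr_ae (Filter.Eventually.of_forall this), integral_const_mul,
        hc_cancel n, mul_zero]
  · -- summability
    apply Summable.of_nonneg_of_le (fun k => norm_nonneg _) (fun k => ?_)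
      ((summable_geometric_of_lt_one hρ0.le hρ1).mul_left K)
    rw [Complex.norm_real, Real.norm_eq_abs, abs_of_pos (hΛpos k)]
  · -- sum of coefficients
    have : ∀ k, ‖((K * ρ ^ k : ℝ) : ℂ)‖ = K * ρ ^ k := by
      intro k
      rw [Complex.norm_real, Real.norm_eq_abs, abs_of_pos (hΛpos k)]
    calc (∑' k, ‖((K * ρ ^ k : ℝ) : ℂ)‖) = ∑' k, K * ρ ^ k := by
          exact tsum_congr this
      _ = K * ∑' k, ρ ^ k := tsum_mul_left
      _ = K * (1-ρ)⁻¹ := by rw [tsum_geometric_of_lt_one hρ0.le hρ1]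
      _ ≤ K * (1-ρ)⁻¹ := le_rfl
  · -- L¹ convergence
    apply squeeze_zero' (g := fun N => (1 + δ₀⁻¹) * (1-ρ)⁻¹ * ρ ^ N)
    · exact Filter.Eventually.of_forall fun N =>
        integral_nonneg fun x => norm_nonneg _
    · rw [Filter.eventually_atTop]
      refine ⟨1, fun N hN => ?_⟩
      obtain ⟨M', rfl⟩ := Nat.exists_eq_add_of_le hN
      have := hbound M'
      calc (∫ x, ‖b x - ∑ n ∈ Finset.range (1 + M'), ((K * ρ ^ n : ℝ) : ℂ) * a n x‖)
          = ∫ x, ‖b x - ∑ n ∈ Finset.range (M' + 1), ((K * ρ ^ n : ℝ) : ℂ) * a n x‖ := by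
            rw [add_comm 1 M']
        _ ≤ (1 + δ₀⁻¹) * (1-ρ)⁻¹ * ρ ^ (M'+1) := hbound M'
        _ = (1 + δ₀⁻¹) * (1-ρ)⁻¹ * ρ ^ (1+M') := by rw [add_comm 1 M']
    · have h1 : Filter.Tendsto (fun N : ℕ => ρ ^ N) Filter.atTop (nhds 0) :=
        tendsto_pow_atTop_nhds_zero_of_lt_one hρ0.le hρ1
      simpa using h1.const_mul ((1 + δ₀⁻¹) * (1-ρ)⁻¹)
end

section
/- Let d ≥ 3 and let P_s(x) = (4πs)^{−d/2} e^{−|x|²/(4s)} denote the Gauss–Weierstrass kernel on ℝ^d. Then for every N > 0 there is a constant C_N > 0 such that for all t > 0 and all x ∈ ℝ^d with x ≠ 0, ∫_0^t P_s(x) s^{−1/2} ds ≤ C_N |x|^{1−d} (1 + |x|/√t)^{−N}. -/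
open MeasureTheory Real ENNReal

private lemma lint_Ioc_rpow {a c : ℝ} (ha : -1 < a) (hc : 0 < c) :
    ∫⁻ s in Set.Ioc (0:ℝ) c, ENNReal.ofReal (s ^ a) = ENNReal.ofReal (c ^ (a+1) / (a+1)) := by
  have hint : IntegrableOn (fun s : ℝ => s ^ a) (Set.Ioc 0 c) := by
    have := intervalIntegral.intervalIntegrable_rpow' (a := 0) (b := c) ha
    rwa [intervalIntegrable_iff_integrableOn_Ioc_of_le hc.le] at this
  rw [← ofReal_integral_eq_lintegral_ofReal hint ?_]
  · congr 1
    rw [← intervalIntegral.integral_of_le hc.le, integral_rpow (Or.inl ha),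
        Real.zero_rpow (by linarith), sub_zero]
  · filter_upwards [ae_restrict_mem measurableSet_Ioc] with s hs
    exact Real.rpow_nonneg hs.1.le a

private lemma lint_Ioi_rpow {a c : ℝ} (ha : a < -1) (hc : 0 < c) :
    ∫⁻ s in Set.Ioi c, ENNReal.ofReal (s ^ a) = ENNReal.ofReal (-c ^ (a+1) / (a+1)) := by
  rw [← ofReal_integral_eq_lintegral_ofReal (integrableOn_Ioi_rpow_of_lt ha hc) ?_,
      integral_Ioi_rpow_of_lt ha hc]
  filter_upwards [ae_restrict_mem measurableSet_Ioi] with s hs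
  exact Real.rpow_nonneg (hc.trans hs).le a

private lemma lemA (d : ℕ) (hd : 3 ≤ d) {c : ℝ} (hc : 0 < c) :
    ∫⁻ s in Set.Ioi (0:ℝ),
        ENNReal.ofReal (s ^ (-(((d:ℝ)+1)/2)) * Real.exp (-(c/s))) ≤
      ENNReal.ofReal
        (((d.factorial : ℝ) * (2/((d:ℝ)+1)) + 2/((d:ℝ)-1)) * c ^ ((1-(d:ℝ))/2)) := by
  have hd3 : (3:ℝ) ≤ (d:ℝ) := by exact_mod_cast hd
  have hfac : (0:ℝ) < (d.factorial : ℝ) := by exact_mod_cast d.factorial_pos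
  -- split the domain
  rw [← Set.Ioc_union_Ioi_eq_Ioi hc.le,
      lintegral_union measurableSet_Ioi Set.Ioc_disjoint_Ioi_same]
  have h1 : ∫⁻ s in Set.Ioc (0:ℝ) c,
      ENNReal.ofReal (s ^ (-(((d:ℝ)+1)/2)) * Real.exp (-(c/s))) ≤
      ENNReal.ofReal ((d.factorial : ℝ) * (2/((d:ℝ)+1)) * c ^ ((1-(d:ℝ))/2)) := by
    have hb : ∀ s ∈ Set.Ioc (0:ℝ) c,
        ENNReal.ofReal (s ^ (-(((d:ℝ)+1)/2)) * Real.exp (-(c/s))) ≤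
        ENNReal.ofReal (((d.factorial : ℝ) * c ^ (-(d:ℝ))) * s ^ (((d:ℝ)-1)/2)) := by
      intro s hs
      apply ENNReal.ofReal_le_ofReal
      have hs0 := hs.1
      have hcs : 0 < c / s := by positivity
      have hexp : Real.exp (-(c/s)) ≤ (d.factorial : ℝ) * (s/c)^d := by
        have hkey : (c/s)^d / (d.factorial : ℝ) ≤ Real.exp (c/s) :=
          Real.pow_div_factorial_le_exp _ hcs.le d
        have hpos : (0:ℝ) < (c/s)^d / (d.factorial : ℝ) := by positivity
        have h2 := inv_anti₀ hpos hkey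
        rw [Real.exp_neg]
        refine h2.trans_eq ?_
        rw [div_pow, div_pow]
        field_simp
      calc s ^ (-(((d:ℝ)+1)/2)) * Real.exp (-(c/s))
          ≤ s ^ (-(((d:ℝ)+1)/2)) * ((d.factorial : ℝ) * (s/c)^d) := by
            apply mul_le_mul_of_nonneg_left hexp (Real.rpow_nonneg hs0.le _)
        _ = ((d.factorial : ℝ) * c ^ (-(d:ℝ))) * s ^ (((d:ℝ)-1)/2) := by
            have hss : s ^ (-(((d:ℝ)+1)/2)) * s ^ ((d:ℝ)) = s ^ (((d:ℝ)-1)/2) := by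
              rw [← Real.rpow_add hs0]; congr 1; ring
            rw [div_pow, ← Real.rpow_natCast s d, ← Real.rpow_natCast c d,
                show s ^ ((d:ℝ)) / c ^ ((d:ℝ)) = s ^ ((d:ℝ)) * (c ^ ((d:ℝ)))⁻¹ from
                  div_eq_mul_inv _ _,
                ← Real.rpow_neg hc.le, ← hss]
            ring
    calc ∫⁻ s in Set.Ioc (0:ℝ) c,
          ENNReal.ofReal (s ^ (-(((d:ℝ)+1)/2)) * Real.exp (-(c/s)))
        ≤ ∫⁻ s in Set.Ioc (0:ℝ) c,
          ENNReal.ofReal (((d.factorial : ℝ) * c ^ (-(d:ℝ))) * s ^ (((d:ℝ)-1)/2)) :=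
          setLIntegral_mono' measurableSet_Ioc hb
      _ = ENNReal.ofReal ((d.factorial : ℝ) * c ^ (-(d:ℝ))) *
          ∫⁻ s in Set.Ioc (0:ℝ) c, ENNReal.ofReal (s ^ (((d:ℝ)-1)/2)) := by
          simp_rw [ENNReal.ofReal_mul (by positivity :
            (0:ℝ) ≤ (d.factorial : ℝ) * c ^ (-(d:ℝ)))]
          exact lintegral_const_mul' _ _ ENNReal.ofReal_ne_top
      _ = ENNReal.ofReal ((d.factorial : ℝ) * c ^ (-(d:ℝ))) *
          ENNReal.ofReal (c ^ (((d:ℝ)-1)/2 + 1) / (((d:ℝ)-1)/2 + 1)) := by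
          rw [lint_Ioc_rpow (by linarith) hc]
      _ ≤ ENNReal.ofReal ((d.factorial : ℝ) * (2/((d:ℝ)+1)) * c ^ ((1-(d:ℝ))/2)) := by
          rw [← ENNReal.ofReal_mul (by positivity :
            (0:ℝ) ≤ (d.factorial : ℝ) * c ^ (-(d:ℝ)))]
          apply ENNReal.ofReal_le_ofReal
          apply le_of_eq
          rw [show (d.factorial : ℝ) * c ^ (-(d:ℝ)) * (c ^ (((d:ℝ)-1)/2 + 1) / (((d:ℝ)-1)/2 + 1))
              = (d.factorial : ℝ) * (1/(((d:ℝ)-1)/2 + 1)) * (c ^ (-(d:ℝ)) * c ^ (((d:ℝ)-1)/2 + 1))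
              by ring]
          rw [← Real.rpow_add hc]
          rw [show -(d:ℝ) + (((d:ℝ)-1)/2 + 1) = (1-(d:ℝ))/2 by ring]
          rw [show ((d:ℝ)-1)/2 + 1 = ((d:ℝ)+1)/2 by ring, one_div_div]
  have h2 : ∫⁻ s in Set.Ioi c,
      ENNReal.ofReal (s ^ (-(((d:ℝ)+1)/2)) * Real.exp (-(c/s))) ≤
      ENNReal.ofReal ((2/((d:ℝ)-1)) * c ^ ((1-(d:ℝ))/2)) := by
    have hb : ∀ s ∈ Set.Ioi c,
        ENNReal.ofReal (s ^ (-(((d:ℝ)+1)/2)) * Real.exp (-(c/s))) ≤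
        ENNReal.ofReal (s ^ (-(((d:ℝ)+1)/2))) := by
      intro s hs
      apply ENNReal.ofReal_le_ofReal
      have hs0 : (0:ℝ) < s := hc.trans hs
      calc s ^ (-(((d:ℝ)+1)/2)) * Real.exp (-(c/s))
          ≤ s ^ (-(((d:ℝ)+1)/2)) * 1 := by
            apply mul_le_mul_of_nonneg_left _ (Real.rpow_nonneg hs0.le _)
            exact Real.exp_le_one_iff.mpr (neg_nonpos.mpr (by positivity))
        _ = s ^ (-(((d:ℝ)+1)/2)) := mul_one _
    calc ∫⁻ s in Set.Ioi c,
          ENNReal.ofReal (s ^ (-(((d:ℝ)+1)/2)) * Real.exp (-(c/s)))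
        ≤ ∫⁻ s in Set.Ioi c, ENNReal.ofReal (s ^ (-(((d:ℝ)+1)/2))) :=
          setLIntegral_mono' measurableSet_Ioi hb
      _ = ENNReal.ofReal (-c ^ (-(((d:ℝ)+1)/2) + 1) / (-(((d:ℝ)+1)/2) + 1)) :=
          lint_Ioi_rpow (by linarith) hc
      _ ≤ ENNReal.ofReal ((2/((d:ℝ)-1)) * c ^ ((1-(d:ℝ))/2)) := by
          apply ENNReal.ofReal_le_ofReal
          apply le_of_eq
          rw [show -(((d:ℝ)+1)/2) + 1 = (1-(d:ℝ))/2 by ring]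
          have h4 : (d:ℝ) - 1 ≠ 0 := by linarith
          have h5 : (1:ℝ) - (d:ℝ) ≠ 0 := by linarith
          field_simp
          ring
  calc _ ≤ ENNReal.ofReal ((d.factorial : ℝ) * (2/((d:ℝ)+1)) * c ^ ((1-(d:ℝ))/2)) +
        ENNReal.ofReal ((2/((d:ℝ)-1)) * c ^ ((1-(d:ℝ))/2)) := add_le_add h1 h2
    _ = ENNReal.ofReal
        (((d.factorial : ℝ) * (2/((d:ℝ)+1)) + 2/((d:ℝ)-1)) * c ^ ((1-(d:ℝ))/2)) := by
        have h6 : (0:ℝ) ≤ 2/((d:ℝ)-1) * c ^ ((1-(d:ℝ))/2) := by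
          have h7 : (0:ℝ) < (d:ℝ)-1 := by linarith
          positivity
        rw [← ENNReal.ofReal_add (by positivity) h6]
        congr 1
        ring

/-- For `d ≥ 3` and every `N > 0` there is `C_N > 0` such that for all
`t > 0` and `x ≠ 0`,
`∫_0^t (4πs)^{-d/2} e^{-|x|²/(4s)} s^{-1/2} ds ≤ C_N |x|^{1-d} (1+|x|/√t)^{-N}`. -/
theorem stmt_11 (d : ℕ) (hd : 3 ≤ d) (N : ℝ) (hN : 0 < N) :
    ∃ C > 0, ∀ t : ℝ, 0 < t → ∀ x : EuclideanSpace ℝ (Fin d), x ≠ 0 →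
      ∫⁻ s in Set.Ioc (0 : ℝ) t,
          ENNReal.ofReal
            ((4 * π * s) ^ (-(d : ℝ) / 2) * Real.exp (-‖x‖ ^ 2 / (4 * s)) *
              s ^ (-(1 : ℝ) / 2)) ≤
        ENNReal.ofReal (C * ‖x‖ ^ ((1 : ℝ) - d) * (1 + ‖x‖ / Real.sqrt t) ^ (-N)) := by
  have hd3 : (3:ℝ) ≤ (d:ℝ) := by exact_mod_cast hd
  have hfac : (0:ℝ) < (d.factorial : ℝ) := by exact_mod_cast d.factorial_pos
  set A : ℝ := (d.factorial : ℝ) * (2/((d:ℝ)+1)) + 2/((d:ℝ)-1) with hA_def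
  have hA : 0 < A := by
    have h1 : (0:ℝ) < 2/((d:ℝ)+1) := by positivity
    have h2 : (0:ℝ) < 2/((d:ℝ)-1) := by
      apply div_pos two_pos; linarith
    exact add_pos (mul_pos hfac h1) h2
  refine ⟨(4*π) ^ (-(d:ℝ)/2) * A * (8:ℝ) ^ (((d:ℝ)-1)/2) * Real.exp (2*N^2), by positivity,
    fun t ht x hx => ?_⟩
  set r : ℝ := ‖x‖ with hr_def
  have hr : 0 < r := norm_pos_iff.mpr hx
  set a : ℝ := r / Real.sqrt t with ha_def
  have hst : (0:ℝ) < Real.sqrt t := Real.sqrt_pos.mpr ht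
  have ha : 0 < a := by positivity
  set c : ℝ := r^2/8 with hc_def
  have hc : 0 < c := by positivity
  set K : ℝ := (4*π) ^ (-(d:ℝ)/2) * Real.exp (-(r^2/(8*t))) with hK_def
  have hK : 0 < K := by positivity
  -- pointwise bound
  have key : ∀ s ∈ Set.Ioc (0:ℝ) t,
      (4 * π * s) ^ (-(d : ℝ) / 2) * Real.exp (-r ^ 2 / (4 * s)) * s ^ (-(1:ℝ)/2)
        ≤ K * (s ^ (-(((d:ℝ)+1)/2)) * Real.exp (-(c / s))) := by
    intro s hs
    have hs0 := hs.1
    have hexp : Real.exp (-r ^ 2 / (4 * s)) ≤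
        Real.exp (-(r^2/(8*t))) * Real.exp (-(c/s)) := by
      rw [← Real.exp_add]
      apply Real.exp_le_exp.mpr
      have hcs : c / s = r^2/(8*s) := by rw [hc_def]; ring
      have h1 : r^2/(8*t) ≤ r^2/(8*s) := by
        apply div_le_div_of_nonneg_left (by positivity) (by positivity) (by linarith [hs.2])
      rw [hcs]
      have : -r^2/(4*s) = -(r^2/(8*s)) + -(r^2/(8*s)) := by ring
      linarith
    have hmul : (4 * π * s) ^ (-(d : ℝ) / 2) =
        (4*π) ^ (-(d:ℝ)/2) * s ^ (-(d:ℝ)/2) :=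
      Real.mul_rpow (by positivity) hs0.le
    have hspow : s ^ (-(d:ℝ)/2) * s ^ (-(1:ℝ)/2) = s ^ (-(((d:ℝ)+1)/2)) := by
      rw [← Real.rpow_add hs0]; congr 1; ring
    calc (4 * π * s) ^ (-(d : ℝ) / 2) * Real.exp (-r ^ 2 / (4 * s)) * s ^ (-(1:ℝ)/2)
        = ((4*π) ^ (-(d:ℝ)/2) * s ^ (-(((d:ℝ)+1)/2))) * Real.exp (-r ^ 2 / (4 * s)) := by
          rw [hmul, ← hspow]; ring
      _ ≤ ((4*π) ^ (-(d:ℝ)/2) * s ^ (-(((d:ℝ)+1)/2))) *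
          (Real.exp (-(r^2/(8*t))) * Real.exp (-(c/s))) := by
          apply mul_le_mul_of_nonneg_left hexp
          positivity
      _ = K * (s ^ (-(((d:ℝ)+1)/2)) * Real.exp (-(c / s))) := by
          rw [hK_def]; ring
  -- integrate the bound
  have step1 : ∫⁻ s in Set.Ioc (0 : ℝ) t,
      ENNReal.ofReal
        ((4 * π * s) ^ (-(d : ℝ) / 2) * Real.exp (-r ^ 2 / (4 * s)) * s ^ (-(1:ℝ)/2)) ≤
      ENNReal.ofReal (K * (A * c ^ ((1-(d:ℝ))/2))) := by
    calc ∫⁻ s in Set.Ioc (0 : ℝ) t,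
        ENNReal.ofReal
          ((4 * π * s) ^ (-(d : ℝ) / 2) * Real.exp (-r ^ 2 / (4 * s)) * s ^ (-(1:ℝ)/2))
        ≤ ∫⁻ s in Set.Ioc (0 : ℝ) t,
          ENNReal.ofReal (K * (s ^ (-(((d:ℝ)+1)/2)) * Real.exp (-(c / s)))) :=
          setLIntegral_mono' measurableSet_Ioc
            (fun s hs => ENNReal.ofReal_le_ofReal (key s hs))
      _ = ENNReal.ofReal K * ∫⁻ s in Set.Ioc (0 : ℝ) t,
          ENNReal.ofReal (s ^ (-(((d:ℝ)+1)/2)) * Real.exp (-(c / s))) := by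
          simp_rw [ENNReal.ofReal_mul hK.le]
          exact lintegral_const_mul' _ _ ENNReal.ofReal_ne_top
      _ ≤ ENNReal.ofReal K * ∫⁻ s in Set.Ioi (0 : ℝ),
          ENNReal.ofReal (s ^ (-(((d:ℝ)+1)/2)) * Real.exp (-(c / s))) := by
          exact mul_le_mul_of_nonneg_left (lintegral_mono_set Set.Ioc_subset_Ioi_self) zero_le'
      _ ≤ ENNReal.ofReal K * ENNReal.ofReal (A * c ^ ((1-(d:ℝ))/2)) := by
          gcongr
          exact lemA d hd hc
      _ = ENNReal.ofReal (K * (A * c ^ ((1-(d:ℝ))/2))) := by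
          rw [← ENNReal.ofReal_mul hK.le]
  refine step1.trans (ENNReal.ofReal_le_ofReal ?_)
  -- now a real-number inequality
  have hcpow : c ^ ((1-(d:ℝ))/2) = r ^ ((1:ℝ)-(d:ℝ)) * (8:ℝ) ^ (((d:ℝ)-1)/2) := by
    rw [hc_def, Real.div_rpow (by positivity) (by norm_num)]
    rw [← Real.rpow_natCast r 2, ← Real.rpow_mul hr.le]
    rw [show ((2:ℕ):ℝ) * ((1-(d:ℝ))/2) = (1:ℝ)-(d:ℝ) by push_cast; ring]
    rw [div_eq_mul_inv, ← Real.rpow_neg (by norm_num : (0:ℝ) ≤ 8)]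
    congr 2
    ring
  have haexp : r^2/(8*t) = a^2/8 := by
    rw [ha_def, div_pow, Real.sq_sqrt ht.le]; ring
  have hexpbd : Real.exp (-(a^2/8)) ≤ Real.exp (2*N^2) * (1 + a) ^ (-N) := by
    have h1a : (0:ℝ) < 1 + a := by linarith
    have hpow : (1+a) ^ N ≤ Real.exp (N * a) := by
      calc (1+a) ^ N ≤ (Real.exp a) ^ N :=
            Real.rpow_le_rpow h1a.le (by linarith [Real.add_one_le_exp a]) hN.le
        _ = Real.exp (a * N) := (Real.exp_mul a N).symm
        _ = Real.exp (N * a) := by rw [mul_comm]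
    rw [Real.rpow_neg h1a.le, ← div_eq_mul_inv, le_div_iff₀ (Real.rpow_pos_of_pos h1a N)]
    calc Real.exp (-(a^2/8)) * (1+a) ^ N ≤ Real.exp (-(a^2/8)) * Real.exp (N * a) :=
          mul_le_mul_of_nonneg_left hpow (Real.exp_pos _).le
      _ = Real.exp (N * a - a^2/8) := by rw [← Real.exp_add]; ring_nf
      _ ≤ Real.exp (2*N^2) := by
          apply Real.exp_le_exp.mpr
          nlinarith [sq_nonneg (a - 4*N)]
  calc K * (A * c ^ ((1-(d:ℝ))/2))
      = ((4*π) ^ (-(d:ℝ)/2) * A * (8:ℝ) ^ (((d:ℝ)-1)/2)) * r ^ ((1:ℝ)-(d:ℝ)) *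
        Real.exp (-(a^2/8)) := by
        rw [hK_def, hcpow, haexp]; ring
    _ ≤ ((4*π) ^ (-(d:ℝ)/2) * A * (8:ℝ) ^ (((d:ℝ)-1)/2)) * r ^ ((1:ℝ)-(d:ℝ)) *
        (Real.exp (2*N^2) * (1 + a) ^ (-N)) := by
        apply mul_le_mul_of_nonneg_left hexpbd
        positivity
    _ = (4*π) ^ (-(d:ℝ)/2) * A * (8:ℝ) ^ (((d:ℝ)-1)/2) * Real.exp (2*N^2) *
        r ^ ((1:ℝ)-(d:ℝ)) * (1 + a) ^ (-N) := by ring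
end

section
/- Let d ≥ 3, let 1 < q < d/(d−1), let 0 < γ ≤ 2 and let N > d + γ. Then there is a constant C > 0 such that the following holds: for every measurable V : ℝ^d → [0,∞) and A ≥ 0 with ∫_{ℝ^d} V(z) |x−z|^{2−d} dz ≤ A for all x ∈ ℝ^d, and for every r > 0 and y₀ ∈ ℝ^d, ( ∫_{ℝ^d} ( r^{1−d} ∫_{ℝ^d} |x−z|^{1−d} (1 + |x−z|/r)^{−N+γ} V(z) (1 + |z−y₀|/r)^{−d+γ} dz )^q dx )^{1/q} ≤ C A r^{−d+d/q}. -/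
open MeasureTheory ENNReal Set Metric Module

section Aux
variable {E : Type*} [NormedAddCommGroup E] [NormedSpace ℝ E] [FiniteDimensional ℝ E]
  [MeasurableSpace E] [BorelSpace E] {μ : Measure E} [μ.IsAddHaarMeasure]

theorem aux_ball_rpow {p : ℝ} (hp : -(finrank ℝ E : ℝ) < p) (hp0 : p < 0) :
    (∫⁻ x in Metric.ball (0 : E) 1, ENNReal.ofReal (‖x‖ ^ p) ∂μ) < ∞ := by
  have hmeas : Measurable fun x : E => ‖x‖ ^ p := measurable_norm.pow measurable_const
  have hnn : ∀ x : E, 0 ≤ ‖x‖ ^ p := fun x => Real.rpow_nonneg (norm_nonneg x) p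
  rw [lintegral_eq_lintegral_meas_le _ (Filter.Eventually.of_forall hnn) hmeas.aemeasurable]
  set f := fun t : ℝ => (μ.restrict (Metric.ball (0 : E) 1)) {a : E | t ≤ ‖a‖ ^ p} with hf
  have hsub : ∀ t : ℝ, 0 < t → {a : E | t ≤ ‖a‖ ^ p} ⊆ Metric.closedBall (0 : E) (t ^ p⁻¹) := by
    intro t ht a ha
    simp only [mem_setOf_eq] at ha
    rcases eq_or_ne a 0 with rfl | ha0
    · exfalso
      rw [norm_zero, Real.zero_rpow hp0.ne] at ha
      linarith
    · have hna : 0 < ‖a‖ := norm_pos_iff.mpr ha0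
      have h2 := Real.rpow_le_rpow_of_nonpos ht ha (inv_nonpos.mpr hp0.le)
      rw [← Real.rpow_mul (norm_nonneg a), mul_inv_cancel₀ hp0.ne, Real.rpow_one] at h2
      exact mem_closedBall_zero_iff.mpr h2
  calc
    ∫⁻ t in Ioi (0:ℝ), f t ≤ ∫⁻ t in Ioc (0:ℝ) 1 ∪ Ioi 1, f t :=
      lintegral_mono_set Ioi_subset_Ioc_union_Ioi
    _ ≤ (∫⁻ t in Ioc (0:ℝ) 1, f t) + ∫⁻ t in Ioi (1:ℝ), f t := lintegral_union_le _ _ _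
    _ < ∞ := ENNReal.add_lt_top.2 ⟨?_, ?_⟩
  · have hb : ∀ t ∈ Ioc (0:ℝ) 1, f t ≤ μ (Metric.ball (0 : E) 1) := by
      intro t _
      calc f t ≤ (μ.restrict (Metric.ball (0 : E) 1)) univ := measure_mono (subset_univ _)
        _ = μ (Metric.ball (0 : E) 1) := by rw [Measure.restrict_apply_univ]
    calc
      ∫⁻ t in Ioc (0:ℝ) 1, f t ≤ ∫⁻ _ in Ioc (0:ℝ) 1, μ (Metric.ball (0 : E) 1) :=
        setLIntegral_mono' measurableSet_Ioc hb
      _ = μ (Metric.ball (0 : E) 1) * volume (Ioc (0:ℝ) 1) := setLIntegral_const _ _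
      _ < ∞ := by
        apply ENNReal.mul_lt_top measure_ball_lt_top
        simp [Real.volume_Ioc]
  · have hb : ∀ t ∈ Ioi (1:ℝ), f t ≤
        ENNReal.ofReal (t ^ (p⁻¹ * (finrank ℝ E : ℝ))) * μ (Metric.ball (0 : E) 1) := by
      intro t ht
      have ht0 : (0:ℝ) < t := lt_trans one_pos ht
      have h1 : f t ≤ μ (Metric.closedBall (0 : E) (t ^ p⁻¹)) :=
        (Measure.restrict_apply_le _ _).trans (measure_mono (hsub t ht0))
      have h2 : μ (Metric.closedBall (0 : E) (t ^ p⁻¹)) =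
          ENNReal.ofReal ((t ^ p⁻¹) ^ finrank ℝ E) * μ (Metric.ball (0 : E) 1) :=
        Measure.addHaar_closedBall _ _ (Real.rpow_nonneg ht0.le _)
      rw [← Real.rpow_natCast (t ^ p⁻¹) (finrank ℝ E), ← Real.rpow_mul ht0.le] at h2
      exact h1.trans h2.le
    have hint : IntegrableOn (fun t : ℝ => t ^ (p⁻¹ * (finrank ℝ E : ℝ))) (Ioi (1:ℝ)) := by
      apply integrableOn_Ioi_rpow_of_lt _ one_pos
      have hpinv : p⁻¹ < 0 := inv_lt_zero.mpr hp0
      have h3 : p * p⁻¹ < -(finrank ℝ E : ℝ) * p⁻¹ := mul_lt_mul_of_neg_right hp hpinv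
      rw [mul_inv_cancel₀ hp0.ne] at h3
      nlinarith
    calc
      ∫⁻ t in Ioi (1:ℝ), f t ≤
          ∫⁻ t in Ioi (1:ℝ), ENNReal.ofReal (t ^ (p⁻¹ * (finrank ℝ E : ℝ))) *
            μ (Metric.ball (0 : E) 1) := setLIntegral_mono' measurableSet_Ioi hb
      _ = (∫⁻ t in Ioi (1:ℝ), ENNReal.ofReal (t ^ (p⁻¹ * (finrank ℝ E : ℝ)))) *
          μ (Metric.ball (0 : E) 1) :=
        lintegral_mul_const' _ _ measure_ball_lt_top.ne
      _ < ∞ := ENNReal.mul_lt_top hint.setLIntegral_lt_top measure_ball_lt_top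

theorem aux_kernel {a b : ℝ} (ha : -(finrank ℝ E : ℝ) < a) (ha0 : a < 0)
    (hb : (finrank ℝ E : ℝ) < b) :
    (∫⁻ v, ENNReal.ofReal (‖v‖ ^ a * (1 + ‖v‖) ^ (-b)) ∂μ) < ∞ := by
  rw [← lintegral_add_compl _ (measurableSet_ball (x := (0:E)) (ε := (1:ℝ)))]
  apply ENNReal.add_lt_top.2
  constructor
  · calc
      ∫⁻ v in Metric.ball (0:E) 1, ENNReal.ofReal (‖v‖ ^ a * (1 + ‖v‖) ^ (-b)) ∂μ
          ≤ ∫⁻ v in Metric.ball (0:E) 1, ENNReal.ofReal (‖v‖ ^ a) ∂μ := by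
        apply lintegral_mono
        intro v
        apply ENNReal.ofReal_le_ofReal
        calc ‖v‖ ^ a * (1 + ‖v‖) ^ (-b) ≤ ‖v‖ ^ a * 1 := by
              apply mul_le_mul_of_nonneg_left _ (Real.rpow_nonneg (norm_nonneg v) a)
              exact Real.rpow_le_one_of_one_le_of_nonpos (by linarith [norm_nonneg v])
                (by linarith [Nat.cast_nonneg (α := ℝ) (finrank ℝ E)])
          _ = ‖v‖ ^ a := mul_one _
      _ < ∞ := aux_ball_rpow ha ha0
  · calc
      ∫⁻ v in (Metric.ball (0:E) 1)ᶜ, ENNReal.ofReal (‖v‖ ^ a * (1 + ‖v‖) ^ (-b)) ∂μ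
          ≤ ∫⁻ v in (Metric.ball (0:E) 1)ᶜ, ENNReal.ofReal ((1 + ‖v‖) ^ (-b)) ∂μ := by
        apply setLIntegral_mono' measurableSet_ball.compl
        intro v hv
        apply ENNReal.ofReal_le_ofReal
        have h1 : (1:ℝ) ≤ ‖v‖ := by
          simp only [mem_compl_iff, Metric.mem_ball, dist_zero_right, not_lt] at hv
          exact hv
        calc ‖v‖ ^ a * (1 + ‖v‖) ^ (-b) ≤ 1 * (1 + ‖v‖) ^ (-b) := by
              apply mul_le_mul_of_nonneg_right _ (Real.rpow_nonneg (by linarith) _)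
              exact Real.rpow_le_one_of_one_le_of_nonpos h1 ha0.le
          _ = (1 + ‖v‖) ^ (-b) := one_mul _
      _ ≤ ∫⁻ v, ENNReal.ofReal ((1 + ‖v‖) ^ (-b)) ∂μ := setLIntegral_le_lintegral _ _
      _ < ∞ := finite_integral_one_add_norm hb

end Aux

/-- Weighted `L^q` estimate for the term `J₁`: for `d ≥ 3`,
`1 < q < d/(d-1)`, `0 < γ ≤ 2`, `N > d + γ`, there is `C > 0` such that whenever
`∫ V(z)|x-z|^{2-d} dz ≤ A` for all `x`, and `r > 0`, `y₀ ∈ ℝ^d`,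
`‖ r^{1-d} ∫ |x-z|^{1-d}(1+|x-z|/r)^{-N+γ} V(z) (1+|z-y₀|/r)^{-d+γ} dz ‖_{L^q(dx)}
  ≤ C A r^{-d+d/q}`. -/
theorem stmt_12 (d : ℕ) (hd : 3 ≤ d) (q γ N : ℝ) (hq : 1 < q)
    (hq' : q < (d : ℝ) / ((d : ℝ) - 1)) (hγ : 0 < γ) (hγ2 : γ ≤ 2) (hN : (d : ℝ) + γ < N) :
    ∃ C > 0, ∀ V : EuclideanSpace ℝ (Fin d) → ℝ, Measurable V → (∀ z, 0 ≤ V z) →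
      ∀ A : ℝ, 0 ≤ A →
      (∀ x : EuclideanSpace ℝ (Fin d),
        ∫⁻ z, ENNReal.ofReal (V z * ‖x - z‖ ^ ((2 : ℝ) - d)) ≤ ENNReal.ofReal A) →
      ∀ r : ℝ, 0 < r → ∀ y₀ : EuclideanSpace ℝ (Fin d),
      (∫⁻ x, (ENNReal.ofReal (r ^ ((1 : ℝ) - d)) *
          ∫⁻ z, ENNReal.ofReal (‖x - z‖ ^ ((1 : ℝ) - d) * (1 + ‖x - z‖ / r) ^ (-N + γ) *
            V z * (1 + ‖z - y₀‖ / r) ^ (-(d : ℝ) + γ))) ^ q) ^ (1 / q) ≤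
        ENNReal.ofReal (C * A * r ^ (-(d : ℝ) + d / q)) := by
  have hd3 : (3:ℝ) ≤ (d:ℝ) := by exact_mod_cast hd
  have hq0 : (0:ℝ) < q := lt_trans one_pos hq
  haveI : NeZero d := ⟨by omega⟩
  set E := EuclideanSpace ℝ (Fin d) with hE
  set a : ℝ := (1 - (d:ℝ)) * q with ha_def
  set b : ℝ := (N - γ) * q with hb_def
  have hfr : finrank ℝ E = d := finrank_euclideanSpace_fin
  have hd1 : (0:ℝ) < (d:ℝ) - 1 := by linarith
  have hqd : q * ((d:ℝ) - 1) < d := (lt_div_iff₀ hd1).mp hq'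
  have ha : -(d:ℝ) < a := by rw [ha_def]; nlinarith
  have ha0 : a < 0 := by rw [ha_def]; nlinarith
  have hb' : (d:ℝ) < b := by rw [hb_def]; nlinarith
  set c0 : ℝ≥0∞ := ∫⁻ v : E, ENNReal.ofReal (‖v‖ ^ a * (1 + ‖v‖) ^ (-b)) with hc0_def
  have hc0 : c0 < ∞ := by
    refine aux_kernel ?_ ha0 ?_ <;> rw [hfr] <;> assumption
  refine ⟨c0.toReal ^ (1/q) + 1, by positivity, ?_⟩
  intro V hVm hV0 A hA hVA r hr y₀
  set Creal : ℝ := c0.toReal ^ (1/q) + 1 with hCreal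
  have hC0 : (0:ℝ) < Creal := by positivity
  -- kernel and weight
  set K : E → ℝ≥0∞ := fun u => ENNReal.ofReal (‖u‖ ^ ((1:ℝ) - d) * (1 + ‖u‖ / r) ^ (-N + γ))
    with hK_def
  set W : E → ℝ≥0∞ := fun z => ENNReal.ofReal (V z * (1 + ‖z - y₀‖ / r) ^ (-(d:ℝ) + γ))
    with hW_def
  have hKm : Measurable K := by
    apply Measurable.ennreal_ofReal
    exact (measurable_norm.pow measurable_const).mul
      ((measurable_const.add (measurable_norm.div measurable_const)).pow measurable_const)
  have hWm : Measurable W := by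
    apply Measurable.ennreal_ofReal
    exact hVm.mul ((measurable_const.add
      (((measurable_id.sub measurable_const).norm).div measurable_const)).pow measurable_const)
  set Ktot : ℝ≥0∞ := ∫⁻ u : E, K u ^ q with hKtot_def
  set IW : ℝ≥0∞ := ∫⁻ z : E, W z with hIW_def
  -- Step 1: rewrite the inner integral
  have h_inner : ∀ x : E, (∫⁻ z : E, ENNReal.ofReal (‖x - z‖ ^ ((1 : ℝ) - d) *
      (1 + ‖x - z‖ / r) ^ (-N + γ) * V z * (1 + ‖z - y₀‖ / r) ^ (-(d : ℝ) + γ))) =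
      ∫⁻ z : E, K (x - z) * W z := by
    intro x
    refine lintegral_congr fun z => ?_
    rw [mul_assoc, ENNReal.ofReal_mul (mul_nonneg (Real.rpow_nonneg (norm_nonneg _) _)
      (Real.rpow_nonneg (by positivity) _))]
  -- Step 2: Hölder
  have hholder : ∀ x : E, (∫⁻ z : E, K (x - z) * W z) ^ q ≤
      (∫⁻ z : E, (K (x - z)) ^ q * W z) * IW ^ (q - 1) := by
    intro x
    have hpq : q.HolderConjugate (Real.conjExponent q) := Real.HolderConjugate.conjExponent hq
    set p' := Real.conjExponent q with hp'_def
    have hKxm : Measurable fun z => K (x - z) := hKm.comp (measurable_const.sub measurable_id)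
    have hf : AEMeasurable (fun z => K (x - z) * (W z) ^ (1/q)) volume :=
      (hKxm.mul (hWm.pow measurable_const)).aemeasurable
    have hg : AEMeasurable (fun z => (W z) ^ (1/p')) volume :=
      (hWm.pow measurable_const).aemeasurable
    have h := ENNReal.lintegral_mul_le_Lp_mul_Lq volume hpq hf hg
    simp only [Pi.mul_apply] at h
    have hfg : (∫⁻ z : E, K (x - z) * (W z) ^ (1/q) * (W z) ^ (1/p')) =
        ∫⁻ z : E, K (x - z) * W z := by
      refine lintegral_congr fun z => ?_
      rw [mul_assoc, ← ENNReal.rpow_add_of_nonneg _ _ (by positivity) hpq.symm.one_div_nonneg,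
        one_div, one_div, hpq.inv_add_inv_eq_one, ENNReal.rpow_one]
    have hfq : (∫⁻ z : E, (K (x - z) * (W z) ^ (1/q)) ^ q) =
        ∫⁻ z : E, (K (x - z)) ^ q * W z := by
      refine lintegral_congr fun z => ?_
      rw [ENNReal.mul_rpow_of_nonneg _ _ hq0.le, ← ENNReal.rpow_mul,
        one_div_mul_cancel hq0.ne', ENNReal.rpow_one]
    have hgp : (∫⁻ z : E, ((W z) ^ (1/p')) ^ p') = IW := by
      refine lintegral_congr fun z => ?_
      rw [← ENNReal.rpow_mul, one_div_mul_cancel hpq.symm.ne_zero, ENNReal.rpow_one]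
    rw [hfg, hfq, hgp] at h
    have h2 := ENNReal.rpow_le_rpow h hq0.le
    rw [ENNReal.mul_rpow_of_nonneg _ _ hq0.le, ← ENNReal.rpow_mul, ← ENNReal.rpow_mul,
      one_div_mul_cancel hq0.ne', ENNReal.rpow_one] at h2
    have e2 : (1/p') * q = q - 1 := by
      rw [hp'_def, Real.conjExponent, one_div_div, div_mul_cancel₀ _ hq0.ne']
    rwa [e2] at h2
  -- Step 3: Tonelli + translation invariance
  have hprod : Measurable fun p : E × E => (K (p.1 - p.2)) ^ q * W p.2 :=
    ((hKm.comp (measurable_fst.sub measurable_snd)).pow measurable_const).mul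
      (hWm.comp measurable_snd)
  have hT : (∫⁻ x : E, ∫⁻ z : E, (K (x - z)) ^ q * W z) = Ktot * IW := by
    rw [lintegral_lintegral_swap hprod.aemeasurable]
    have h1 : ∀ z : E, (∫⁻ x : E, (K (x - z)) ^ q * W z) = Ktot * W z := by
      intro z
      have hm1 : Measurable fun x : E => K (x - z) ^ q := by
        exact (hKm.comp (measurable_id.sub measurable_const)).pow measurable_const
      rw [lintegral_mul_const _ hm1]
      congr 1
      exact lintegral_sub_right_eq_self (fun u => K u ^ q) z
    calc (∫⁻ z : E, ∫⁻ x : E, (K (x - z)) ^ q * W z) = ∫⁻ z : E, Ktot * W z :=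
          lintegral_congr h1
      _ = Ktot * IW := lintegral_const_mul _ hWm
  -- Step 4: scaling of the kernel integral
  have hKtot : Ktot = ENNReal.ofReal (r ^ ((d:ℝ) + a)) * c0 := by
    have hKq : ∀ u : E, K u ^ q =
        ENNReal.ofReal (‖u‖ ^ a * (1 + ‖u‖ / r) ^ ((-N + γ) * q)) := by
      intro u
      rw [hK_def]
      rw [ENNReal.ofReal_rpow_of_nonneg (mul_nonneg (Real.rpow_nonneg (norm_nonneg _) _)
        (Real.rpow_nonneg (by positivity) _)) hq0.le]
      congr 1
      rw [Real.mul_rpow (Real.rpow_nonneg (norm_nonneg _) _) (Real.rpow_nonneg (by positivity) _),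
        ← Real.rpow_mul (norm_nonneg _), ← Real.rpow_mul (by positivity)]
    set g : E → ℝ≥0∞ := fun u => ENNReal.ofReal (‖u‖ ^ a * (1 + ‖u‖ / r) ^ ((-N + γ) * q))
      with hg_def
    have hgm : Measurable g := by
      apply Measurable.ennreal_ofReal
      exact (measurable_norm.pow measurable_const).mul
        ((measurable_const.add (measurable_norm.div measurable_const)).pow measurable_const)
    have hKg : Ktot = ∫⁻ u : E, g u := lintegral_congr hKq
    have hmap : (∫⁻ v : E, g (r • v)) =
        ENNReal.ofReal |((r:ℝ) ^ finrank ℝ E)⁻¹| * ∫⁻ u : E, g u := by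
      rw [← lintegral_map hgm (measurable_const_smul r), Measure.map_addHaar_smul volume hr.ne',
        lintegral_smul_measure, smul_eq_mul]
    have hgs : ∀ v : E, g (r • v) =
        ENNReal.ofReal (r ^ a) * ENNReal.ofReal (‖v‖ ^ a * (1 + ‖v‖) ^ (-b)) := by
      intro v
      have hnorm : ‖r • v‖ = r * ‖v‖ := by
        rw [norm_smul, Real.norm_eq_abs, abs_of_pos hr]
      have hdiv : r * ‖v‖ / r = ‖v‖ := mul_div_cancel_left₀ _ hr.ne'
      have hexp : (-N + γ) * q = -b := by rw [hb_def]; ring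
      rw [hg_def]
      simp only
      rw [hnorm, hdiv, Real.mul_rpow hr.le (norm_nonneg v), hexp, mul_assoc,
        ENNReal.ofReal_mul (Real.rpow_nonneg hr.le _)]
    have hleft : (∫⁻ v : E, g (r • v)) = ENNReal.ofReal (r ^ a) * c0 := by
      rw [hc0_def]
      calc (∫⁻ v : E, g (r • v))
          = ∫⁻ v : E, ENNReal.ofReal (r ^ a) * ENNReal.ofReal (‖v‖ ^ a * (1 + ‖v‖) ^ (-b)) :=
            lintegral_congr hgs
        _ = _ := lintegral_const_mul _ (by
            apply Measurable.ennreal_ofReal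
            exact (measurable_norm.pow measurable_const).mul
              ((measurable_const.add measurable_norm).pow measurable_const))
    have hcancel : ENNReal.ofReal (r ^ finrank ℝ E) *
        ENNReal.ofReal |((r:ℝ) ^ finrank ℝ E)⁻¹| = 1 := by
      rw [abs_of_pos (by positivity), ← ENNReal.ofReal_mul (by positivity),
        mul_inv_cancel₀ (by positivity), ENNReal.ofReal_one]
    have hKeq : Ktot = ENNReal.ofReal (r ^ finrank ℝ E) * (ENNReal.ofReal (r ^ a) * c0) := by
      rw [← hleft, hmap, ← hKg, ← mul_assoc, hcancel, one_mul]
    rw [hKeq, hfr, ← mul_assoc, ← ENNReal.ofReal_mul (by positivity)]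
    congr 2
    rw [← Real.rpow_natCast r d, ← Real.rpow_add hr]
  -- Step 5: the weight integral bound
  have hae : ∀ᵐ z : E, z ≠ y₀ := by
    refine (MeasureTheory.compl_mem_ae_iff).mpr ?_
    exact measure_singleton y₀
  have hWb : IW ≤ ENNReal.ofReal (r ^ ((d:ℝ) - 2)) * ENNReal.ofReal A := by
    have hptwise : ∀ᵐ z : E, W z ≤ ENNReal.ofReal (r ^ ((d:ℝ) - 2)) *
        ENNReal.ofReal (V z * ‖y₀ - z‖ ^ ((2:ℝ) - d)) := by
      filter_upwards [hae] with z hz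
      have ht : 0 < ‖z - y₀‖ := norm_pos_iff.mpr (sub_ne_zero.mpr hz)
      have key : (1 + ‖z - y₀‖ / r) ^ (-(d:ℝ) + γ) ≤
          r ^ ((d:ℝ) - 2) * ‖z - y₀‖ ^ ((2:ℝ) - d) := by
        have h1 : (1 + ‖z - y₀‖ / r) ^ (-(d:ℝ) + γ) ≤ (1 + ‖z - y₀‖ / r) ^ ((2:ℝ) - d) :=
          Real.rpow_le_rpow_of_exponent_le
            (by have := div_nonneg (norm_nonneg (z - y₀)) hr.le; linarith) (by linarith)
        have h2 : (1 + ‖z - y₀‖ / r) ^ ((2:ℝ) - d) ≤ (‖z - y₀‖ / r) ^ ((2:ℝ) - d) :=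
          Real.rpow_le_rpow_of_nonpos (div_pos ht hr) (by linarith) (by linarith)
        have h3 : (‖z - y₀‖ / r) ^ ((2:ℝ) - d) =
            r ^ ((d:ℝ) - 2) * ‖z - y₀‖ ^ ((2:ℝ) - d) := by
          rw [Real.div_rpow ht.le hr.le, div_eq_mul_inv, ← Real.rpow_neg hr.le, mul_comm]
          congr 1
          ring
        exact h1.trans (h2.trans_eq h3)
      calc W z ≤ ENNReal.ofReal (V z * (r ^ ((d:ℝ) - 2) * ‖z - y₀‖ ^ ((2:ℝ) - d))) := by
            rw [hW_def]
            exact ENNReal.ofReal_le_ofReal (mul_le_mul_of_nonneg_left key (hV0 z))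
        _ = ENNReal.ofReal (r ^ ((d:ℝ) - 2)) *
            ENNReal.ofReal (V z * ‖y₀ - z‖ ^ ((2:ℝ) - d)) := by
            rw [norm_sub_rev z y₀, mul_left_comm,
              ENNReal.ofReal_mul (by positivity)]
    calc IW ≤ ∫⁻ z : E, ENNReal.ofReal (r ^ ((d:ℝ) - 2)) *
          ENNReal.ofReal (V z * ‖y₀ - z‖ ^ ((2:ℝ) - d)) := lintegral_mono_ae hptwise
      _ = ENNReal.ofReal (r ^ ((d:ℝ) - 2)) *
          ∫⁻ z : E, ENNReal.ofReal (V z * ‖y₀ - z‖ ^ ((2:ℝ) - d)) :=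
          lintegral_const_mul' _ _ ENNReal.ofReal_ne_top
      _ ≤ ENNReal.ofReal (r ^ ((d:ℝ) - 2)) * ENNReal.ofReal A :=
          mul_le_mul_right (hVA y₀) _
  -- Step 6: assemble
  refine (le_of_eq (congrArg (· ^ (1/q)) (lintegral_congr fun x =>
    congrArg (fun t => (ENNReal.ofReal (r ^ ((1:ℝ) - d)) * t) ^ q) (h_inner x)))).trans ?_
  have hmx : Measurable fun x : E => ∫⁻ z : E, (K (x - z)) ^ q * W z :=
    Measurable.lintegral_prod_right hprod
  have hmain : (∫⁻ x : E, (∫⁻ z : E, K (x - z) * W z) ^ q) ≤ Ktot * IW ^ q := by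
    calc (∫⁻ x : E, (∫⁻ z : E, K (x - z) * W z) ^ q)
        ≤ ∫⁻ x : E, (∫⁻ z : E, (K (x - z)) ^ q * W z) * IW ^ (q - 1) :=
          lintegral_mono hholder
      _ = (∫⁻ x : E, ∫⁻ z : E, (K (x - z)) ^ q * W z) * IW ^ (q - 1) :=
          lintegral_mul_const _ hmx
      _ = (Ktot * IW) * IW ^ (q - 1) := by rw [hT]
      _ = Ktot * IW ^ q := by
          rw [mul_assoc]
          congr 1
          nth_rewrite 1 [← ENNReal.rpow_one IW]
          rw [← ENNReal.rpow_add_of_nonneg _ _ zero_le_one (by linarith)]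
          norm_num
  have hc0q : c0 ^ (1/q) ≤ ENNReal.ofReal Creal := by
    rw [← ENNReal.ofReal_toReal hc0.ne, ENNReal.ofReal_rpow_of_nonneg ENNReal.toReal_nonneg
      (by positivity)]
    exact ENNReal.ofReal_le_ofReal (by rw [hCreal]; linarith)
  calc (∫⁻ x : E, (ENNReal.ofReal (r ^ ((1:ℝ) - d)) * ∫⁻ z : E, K (x - z) * W z) ^ q) ^ (1/q)
      = ENNReal.ofReal (r ^ ((1:ℝ) - d)) *
        (∫⁻ x : E, (∫⁻ z : E, K (x - z) * W z) ^ q) ^ (1/q) := by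
        simp_rw [ENNReal.mul_rpow_of_nonneg _ _ hq0.le]
        rw [lintegral_const_mul' _ _ (ENNReal.rpow_ne_top_of_nonneg hq0.le
          ENNReal.ofReal_ne_top),
          ENNReal.mul_rpow_of_nonneg _ _ (by positivity), ← ENNReal.rpow_mul,
          mul_one_div_cancel hq0.ne', ENNReal.rpow_one]
    _ ≤ ENNReal.ofReal (r ^ ((1:ℝ) - d)) * (Ktot * IW ^ q) ^ (1/q) :=
        mul_le_mul_right (ENNReal.rpow_le_rpow hmain (by positivity)) _
    _ = ENNReal.ofReal (r ^ ((1:ℝ) - d)) * (Ktot ^ (1/q) * IW) := by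
        rw [ENNReal.mul_rpow_of_nonneg _ _ (by positivity), ← ENNReal.rpow_mul,
          mul_one_div_cancel hq0.ne', ENNReal.rpow_one]
    _ ≤ ENNReal.ofReal (r ^ ((1:ℝ) - d)) *
        ((ENNReal.ofReal (r ^ (((d:ℝ) + a) * (1/q))) * ENNReal.ofReal Creal) *
          (ENNReal.ofReal (r ^ ((d:ℝ) - 2)) * ENNReal.ofReal A)) := by
        apply mul_le_mul_right
        apply mul_le_mul' _ hWb
        rw [hKtot, ENNReal.mul_rpow_of_nonneg _ _ (by positivity),
          ENNReal.ofReal_rpow_of_nonneg (by positivity) (by positivity),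
          ← Real.rpow_mul hr.le]
        exact mul_le_mul_right hc0q _
    _ = ENNReal.ofReal (Creal * A * r ^ (-(d:ℝ) + (d:ℝ)/q)) := by
        rw [← ENNReal.ofReal_mul (by positivity), ← ENNReal.ofReal_mul (by positivity),
          ← ENNReal.ofReal_mul (by positivity), ← ENNReal.ofReal_mul (by positivity)]
        congr 1
        have hexp : ((1:ℝ) - d) + ((((d:ℝ) + a) * (1/q)) + ((d:ℝ) - 2)) =
            -(d:ℝ) + (d:ℝ)/q := by
          rw [ha_def]
          field_simp
          ring
        have hrpow : r ^ ((1:ℝ) - d) * (r ^ (((d:ℝ) + a) * (1/q)) * r ^ ((d:ℝ) - 2)) =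
            r ^ (-(d:ℝ) + (d:ℝ)/q) := by
          rw [← Real.rpow_add hr, ← Real.rpow_add hr, hexp]
        rw [← hrpow]
        ring
end
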